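/- arXiv:2004.04960 — 8 statements merged into one kernel-verified Lean document; each statement's English description precedes it below -/
import Mathlib

section
/- Let ω(z) = c₁z + c₂z² + ⋯ be a Schwarz function (analytic on the unit disk with ω(0) = 0 and |ω(z)| < 1). Then |c₃ - 2c₁c₂ + c₁³| ≤ 1. -/
open Complex Metric Filter Asymptotics Topology NNReal

lemma aux_re_lt_half {w : ℂ} (hw : ‖w‖ < 1) : (w / (1 + w)).re < 1/2 := by
  have hns : Complex.normSq w < 1 := by
    have := Complex.sq_norm w
    nlinarith [norm_nonneg w]
  have h1 : (1 : ℂ) + w ≠ 0 := by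
    intro h
    have : w = -1 := by linear_combination h
    simp [this] at hw
  have h0 : 0 < Complex.normSq (1 + w) := Complex.normSq_pos.2 h1
  rw [Complex.div_re, ← add_div, div_lt_iff₀ h0]
  simp only [Complex.normSq_apply, Complex.add_re, Complex.add_im, Complex.one_re,
    Complex.one_im] at *
  nlinarith

lemma aux_abs_lt_one {a : ℂ} (ha : a.re < 1/2) : ‖a / (1 - a)‖ < 1 := by
  have h0 : (1 : ℂ) - a ≠ 0 := by
    intro h
    have : a = 1 := by linear_combination -h
    rw [this] at ha
    norm_num at ha
  rw [norm_div, div_lt_one (norm_pos_iff.mpr h0)]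
  have hsq : ‖a‖ ^ 2 < ‖1 - a‖ ^ 2 := by
    rw [Complex.sq_norm, Complex.sq_norm]
    simp only [Complex.normSq_apply, Complex.sub_re, Complex.sub_im, Complex.one_re,
      Complex.one_im]
    nlinarith
  exact lt_of_pow_lt_pow_left₀ 2 (norm_nonneg _) hsq

lemma aux_pow_bigO {m n : ℕ} (h : n ≤ m) : (fun z : ℂ => z ^ m) =O[𝓝 0] fun z => z ^ n := by
  have h1 : (fun z : ℂ => z ^ (m - n)) =O[𝓝 (0 : ℂ)] fun _ => (1 : ℂ) :=
    ((continuous_pow (m - n)).tendsto 0).isBigO_one ℂ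
  have h2 := (isBigO_refl (fun z : ℂ => z ^ n) (𝓝 0)).mul h1
  have h3 : (fun z : ℂ => z ^ n * z ^ (m - n)) = fun z : ℂ => z ^ m := by
    funext z; rw [← pow_add]; congr 1; omega
  rw [h3] at h2
  simpa using h2

lemma aux_mul_bigO_pow (n : ℕ) {f : ℂ → ℂ} (hf : Continuous f) :
    (fun z : ℂ => z ^ n * f z) =O[𝓝 0] fun z => z ^ n := by
  have h1 : f =O[𝓝 (0 : ℂ)] fun _ => (1 : ℂ) := (hf.tendsto 0).isBigO_one ℂ
  simpa using (isBigO_refl (fun z : ℂ => z ^ n) (𝓝 0)).mul h1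

lemma aux_val {f : ℂ → ℂ} {p : FormalMultilinearSeries ℂ ℂ ℂ}
    (hf : HasFPowerSeriesAt f p 0) {l : ℂ}
    (h : Tendsto f (𝓝[≠] (0 : ℂ)) (𝓝 l)) : f 0 = l :=
  tendsto_nhds_unique (hf.continuousAt.tendsto.mono_left nhdsWithin_le_nhds) h

lemma coeff3_bound (G : ℂ → ℂ) (b : ℂ)
    (hd : DifferentiableOn ℂ G (ball 0 1))
    (hlt : ∀ z ∈ ball (0 : ℂ) 1, ‖G z‖ < 1)
    (h0 : G 0 = 0)
    (hasym : (fun z => G z - b * z ^ 3) =o[𝓝 0] fun z => z ^ 3) :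
    ‖b‖ ≤ 1 := by
  -- limits of G z / z^k on the punctured neighborhood
  have ht3 : Tendsto (fun z => G z / z ^ 3) (𝓝[≠] (0 : ℂ)) (𝓝 b) := by
    have h := hasym.tendsto_div_nhds_zero.mono_left (nhdsWithin_le_nhds (s := {(0:ℂ)}ᶜ))
    have h2 : Tendsto (fun z => (G z - b * z ^ 3) / z ^ 3 + b) (𝓝[≠] (0 : ℂ)) (𝓝 (0 + b)) :=
      h.add tendsto_const_nhds
    rw [zero_add] at h2
    refine h2.congr' ?_
    filter_upwards [self_mem_nhdsWithin] with z hz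
    have hz3 : z ^ 3 ≠ 0 := pow_ne_zero _ hz
    show (G z - b * z ^ 3) / z ^ 3 + b = G z / z ^ 3
    rw [_root_.sub_div, mul_div_assoc, div_self hz3, mul_one, sub_add_cancel]
  have hzt : ∀ k : ℕ, 0 < k → Tendsto (fun z : ℂ => z ^ k) (𝓝[≠] (0 : ℂ)) (𝓝 0) := by
    intro k hk
    refine ((continuous_pow k).tendsto' 0 0 (by simp [hk.ne'])).mono_left nhdsWithin_le_nhds
  have ht2 : Tendsto (fun z => G z / z ^ 2) (𝓝[≠] (0 : ℂ)) (𝓝 0) := by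
    have := ht3.mul (hzt 1 one_pos)
    rw [mul_zero] at this
    refine this.congr' ?_
    filter_upwards [self_mem_nhdsWithin] with z hz
    have : z ≠ 0 := hz
    field_simp
  have ht1 : Tendsto (fun z => G z / z) (𝓝[≠] (0 : ℂ)) (𝓝 0) := by
    have := ht3.mul (hzt 2 two_pos)
    rw [mul_zero] at this
    refine this.congr' ?_
    filter_upwards [self_mem_nhdsWithin] with z hz
    have : z ≠ 0 := hz
    field_simp
  have key : ∀ r : ℝ≥0, 0 < r → (r : ℝ) < 1 → ‖b‖ * (r : ℝ) ^ 3 ≤ 1 := by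
    intro r hr0 hr1
    have hsub : closedBall (0 : ℂ) r ⊆ ball 0 1 := closedBall_subset_ball hr1
    have hq : HasFPowerSeriesOnBall G (cauchyPowerSeries G 0 r) 0 r :=
      Complex.hasFPowerSeriesOnBall_of_differentiable_off_countable Set.countable_empty
        (hd.continuousOn.mono hsub)
        (fun z hz => hd.differentiableAt
          (isOpen_ball.mem_nhds (hsub (ball_subset_closedBall hz.1)))) hr0
    set q := cauchyPowerSeries G 0 (r : ℝ) with hq_def
    have hq1 : HasFPowerSeriesAt G q 0 := hq.hasFPowerSeriesAt
    have d1 := hq1.has_fpower_series_dslope_fslope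
    set G1 := dslope G 0 with hG1
    have e1 : ∀ᶠ z in 𝓝[≠] (0 : ℂ), G z / z = G1 z := by
      filter_upwards [self_mem_nhdsWithin] with z hz
      rw [hG1, dslope_of_ne _ hz, slope_def_field, h0, sub_zero, sub_zero]
    have v1 : G1 0 = 0 := aux_val d1 (ht1.congr' e1)
    have d2 := d1.has_fpower_series_dslope_fslope
    set G2 := dslope G1 0 with hG2
    have e2 : ∀ᶠ z in 𝓝[≠] (0 : ℂ), G z / z ^ 2 = G2 z := by
      filter_upwards [self_mem_nhdsWithin, e1] with z hz h1
      rw [hG2, dslope_of_ne _ hz, slope_def_field, v1, sub_zero, sub_zero, ← h1]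
      ring
    have v2 : G2 0 = 0 := aux_val d2 (ht2.congr' e2)
    have d3 := d2.has_fpower_series_dslope_fslope
    set G3 := dslope G2 0 with hG3
    have e3 : ∀ᶠ z in 𝓝[≠] (0 : ℂ), G z / z ^ 3 = G3 z := by
      filter_upwards [self_mem_nhdsWithin, e2] with z hz h2
      rw [hG3, dslope_of_ne _ hz, slope_def_field, v2, sub_zero, sub_zero, ← h2]
      ring
    have v3 : G3 0 = b := aux_val d3 (ht3.congr' e3)
    have hc3 : q.coeff 3 = b := by
      have h := d3.coeff_zero 1
      have : q.fslope.fslope.fslope.coeff 0 = G3 0 := h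
      simpa [FormalMultilinearSeries.coeff_fslope, v3] using this
    -- Cauchy estimate
    have hbound := norm_cauchyPowerSeries_le G 0 (r : ℝ) 3
    have hint : (∫ θ in (0:ℝ)..2 * Real.pi, ‖G (circleMap 0 (r : ℝ) θ)‖) ≤ 2 * Real.pi := by
      have hmem : ∀ θ : ℝ, circleMap 0 (r : ℝ) θ ∈ ball (0 : ℂ) 1 := by
        intro θ
        rw [mem_ball_zero_iff, norm_circleMap_zero,
          _root_.abs_of_nonneg r.coe_nonneg]
        exact hr1
      have hcont : Continuous fun θ : ℝ => ‖G (circleMap 0 (r : ℝ) θ)‖ :=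
        (hd.continuousOn.comp_continuous (continuous_circleMap 0 (r : ℝ)) hmem).norm
      calc (∫ θ in (0:ℝ)..2 * Real.pi, ‖G (circleMap 0 (r : ℝ) θ)‖)
          ≤ ∫ _ in (0:ℝ)..2 * Real.pi, (1 : ℝ) := by
            apply intervalIntegral.integral_mono_on Real.two_pi_pos.le
              (hcont.intervalIntegrable _ _) (intervalIntegrable_const)
            intro θ _
            exact (hlt _ (hmem θ)).le
        _ = 2 * Real.pi := by simp
    have habs : ‖b‖ ≤ ((r : ℝ)⁻¹) ^ 3 := by
      have h1 : ‖b‖ = ‖q 3‖ := by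
        rw [FormalMultilinearSeries.norm_apply_eq_norm_coef, hc3]
      rw [h1]
      refine hbound.trans ?_
      have hfac : (2 * Real.pi)⁻¹ * (∫ θ in (0:ℝ)..2 * Real.pi, ‖G (circleMap 0 (r : ℝ) θ)‖)
          ≤ 1 := by
        rw [inv_mul_le_iff₀ Real.two_pi_pos, mul_one]
        exact hint
      have habs_r : |(r : ℝ)|⁻¹ ^ 3 = ((r : ℝ)⁻¹) ^ 3 := by
        rw [_root_.abs_of_nonneg r.coe_nonneg]
      rw [habs_r]
      have hnonneg : (0:ℝ) ≤ ((r : ℝ)⁻¹) ^ 3 := by positivity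
      nlinarith [hfac, hnonneg]
    have hr0' : (0:ℝ) < (r : ℝ) := hr0
    calc ‖b‖ * (r : ℝ) ^ 3 ≤ ((r : ℝ)⁻¹) ^ 3 * (r : ℝ) ^ 3 := by
          apply mul_le_mul_of_nonneg_right habs (by positivity)
      _ = 1 := by field_simp
  have hlim : Tendsto (fun r : ℝ => ‖b‖ * r ^ 3) (𝓝[<] (1 : ℝ))
      (𝓝 (‖b‖)) := by
    have : Tendsto (fun r : ℝ => ‖b‖ * r ^ 3) (𝓝 (1 : ℝ))
        (𝓝 (‖b‖ * 1 ^ 3)) :=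
      tendsto_const_nhds.mul ((continuous_pow 3).tendsto 1)
    simpa using this.mono_left nhdsWithin_le_nhds
  refine le_of_tendsto hlim ?_
  filter_upwards [Ioo_mem_nhdsLT_of_mem (Set.mem_Ioc.2 ⟨zero_lt_one, le_refl (1:ℝ)⟩)] with r hr
  have h := key ⟨r, hr.1.le⟩ (by exact_mod_cast hr.1) (by exact_mod_cast hr.2)
  exact h

set_option maxHeartbeats 1000000 in
theorem schwarz_coeff_bound_0 (ω : ℂ → ℂ) (c : ℕ → ℂ)
    (hc0 : c 0 = 0)
    (hsum : ∀ z ∈ ball (0 : ℂ) 1, HasSum (fun n => c n * z ^ n) (ω z))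
    (hω : ∀ z ∈ ball (0 : ℂ) 1, ‖ω z‖ < 1) :
    ‖c 3 - 2 * c 1 * c 2 + c 1 ^ 3‖ ≤ 1 := by
  -- the primitive cube root of unity
  set η : ℂ := ⟨-1/2, Real.sqrt 3 / 2⟩ with hη_def
  have h3 : Real.sqrt 3 * Real.sqrt 3 = 3 := Real.mul_self_sqrt (by norm_num)
  have hre : η.re = -1/2 := rfl
  have him : η.im = Real.sqrt 3 / 2 := rfl
  have hη2 : η ^ 2 + η + 1 = 0 := by
    apply Complex.ext <;>
      simp [pow_two, Complex.mul_re, Complex.mul_im, Complex.add_re, Complex.add_im,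
        hre, him] <;> nlinarith [h3]
  have hηabs : ‖η‖ = 1 := by
    rw [Complex.norm_def, show Complex.normSq η = 1 by
      simp [Complex.normSq_apply, hre, him]; nlinarith [h3], Real.sqrt_one]
  -- power series of ω on the unit ball
  set p := FormalMultilinearSeries.ofScalars ℂ c with hp_def
  have hball : HasFPowerSeriesOnBall ω p 0 1 := by
    refine ⟨?_, one_pos, ?_⟩
    · refine ENNReal.le_of_forall_nnreal_lt fun r hr => ?_
      have hr1 : (r : ℝ) < 1 := by exact_mod_cast hr
      have hmem : ((r : ℝ) : ℂ) ∈ ball (0 : ℂ) 1 := by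
        simp [mem_ball_zero_iff, _root_.abs_of_nonneg r.coe_nonneg, hr1]
      have hsummable := (hsum _ hmem).summable.tendsto_atTop_zero
      refine p.le_radius_of_tendsto (l := 0) ?_
      have := hsummable.norm
      rw [norm_zero] at this
      refine this.congr fun n => ?_
      rw [hp_def, FormalMultilinearSeries.ofScalars_norm, norm_mul, norm_pow]
      congr 1
      simp [_root_.abs_of_nonneg r.coe_nonneg]
    · intro y hy
      have hy' : y ∈ ball (0 : ℂ) 1 := by
        rw [mem_emetric_ball_zero_iff] at hy
        rw [mem_ball_zero_iff]
        simp only [enorm_eq_nnnorm, ENNReal.coe_lt_one_iff] at hy; exact_mod_cast hy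
      have hterm : (fun n => p n fun _ => y) = fun n => c n * y ^ n := by
        funext n
        rw [hp_def, FormalMultilinearSeries.ofScalars_apply_eq, smul_eq_mul]
      rw [zero_add, hterm]
      exact hsum y hy'
  have hmemE : ∀ z : ℂ, z ∈ ball (0 : ℂ) 1 → z ∈ Metric.eball (0 : ℂ) 1 := by
    intro z hz
    rw [mem_ball_zero_iff] at hz
    rw [mem_emetric_ball_zero_iff]
    simp only [enorm_eq_nnnorm, ENNReal.coe_lt_one_iff]; exact_mod_cast hz
  have hωdiff : DifferentiableOn ℂ ω (ball 0 1) :=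
    hball.differentiableOn.mono fun w hw => hmemE w hw
  have hω0 : ω 0 = 0 := by
    have h1 := hsum 0 (by simp)
    have h2 := hasSum_single (f := fun n => c n * (0 : ℂ) ^ n) 0
      (fun b hb => by simp [zero_pow hb])
    have := h1.unique h2
    simpa [hc0] using this
  have hden : ∀ z ∈ ball (0 : ℂ) 1, 1 + ω z ≠ 0 := by
    intro z hz h
    have h2 := hω z hz
    have : ω z = -1 := by linear_combination h
    simp [this] at h2
  set F : ℂ → ℂ := fun z => ω z / (1 + ω z) with hF_def
  have hrot : ∀ (u z : ℂ), ‖u‖ = 1 → z ∈ ball (0 : ℂ) 1 → u * z ∈ ball (0 : ℂ) 1 := by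
    intro u z hu hz
    rw [mem_ball_zero_iff] at *
    rw [norm_mul, hu, one_mul]
    exact hz
  have hη2abs : ‖η ^ 2‖ = 1 := by rw [norm_pow, hηabs, one_pow]
  set A : ℂ → ℂ := fun z => (F z + F (η * z) + F (η ^ 2 * z)) / 3 with hA_def
  have hFre : ∀ z ∈ ball (0 : ℂ) 1, (F z).re < 1/2 := fun z hz => aux_re_lt_half (hω z hz)
  have hAre : ∀ z ∈ ball (0 : ℂ) 1, (A z).re < 1/2 := by
    intro z hz
    have h1 := hFre z hz
    have h2 := hFre _ (hrot η z hηabs hz)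
    have h3' := hFre _ (hrot (η ^ 2) z hη2abs hz)
    have : A z = (F z + F (η * z) + F (η ^ 2 * z)) / ((3 : ℝ) : ℂ) := by norm_num [hA_def]
    rw [this, Complex.div_ofReal_re]
    simp only [Complex.add_re]
    linarith
  set G : ℂ → ℂ := fun z => A z / (1 - A z) with hG_def
  have hGlt : ∀ z ∈ ball (0 : ℂ) 1, ‖G z‖ < 1 := fun z hz =>
    aux_abs_lt_one (hAre z hz)
  have hAden : ∀ z ∈ ball (0 : ℂ) 1, 1 - A z ≠ 0 := by
    intro z hz h
    have h2 := hAre z hz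
    have : A z = 1 := by linear_combination -h
    rw [this] at h2
    norm_num at h2
  have hFdiff : DifferentiableOn ℂ F (ball 0 1) :=
    hωdiff.div ((differentiableOn_const 1).add hωdiff) hden
  have hcomp : ∀ u : ℂ, ‖u‖ = 1 →
      DifferentiableOn ℂ (fun z => F (u * z)) (ball 0 1) := by
    intro u hu
    exact hFdiff.comp ((differentiable_const u).mul differentiable_id).differentiableOn
      (fun z hz => hrot u z hu hz)
  have hAdiff : DifferentiableOn ℂ A (ball 0 1) := by
    have := ((hFdiff.add (hcomp η hηabs)).add (hcomp (η ^ 2) hη2abs)).div_const (3 : ℂ)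
    exact this
  have hGdiff : DifferentiableOn ℂ G (ball 0 1) :=
    hAdiff.div ((differentiableOn_const 1).sub hAdiff) hAden
  have hG0 : G 0 = 0 := by
    simp [hG_def, hA_def, hF_def, hω0]
  -- asymptotics
  set b : ℂ := c 3 - 2 * c 1 * c 2 + c 1 ^ 3 with hb_def
  set d2 : ℂ := c 2 - c 1 ^ 2 with hd2_def
  set Cf : ℂ → ℂ := fun z => c 1 * z + c 2 * z ^ 2 + c 3 * z ^ 3 with hCf_def
  set Qf : ℂ → ℂ := fun z => c 1 * z + d2 * z ^ 2 + b * z ^ 3 with hQf_def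
  have hball_nhds : ball (0 : ℂ) 1 ∈ 𝓝 (0 : ℂ) := isOpen_ball.mem_nhds (by simp)
  have hωcont : ContinuousAt ω 0 :=
    (hωdiff.differentiableAt hball_nhds).continuousAt
  have hE : (fun z => ω z - Cf z) =O[𝓝 0] fun z : ℂ => z ^ 4 := by
    have h := hball.hasFPowerSeriesAt.isBigO_sub_partialSum_pow 4
    have heq : (fun y : ℂ => ω (0 + y) - p.partialSum 4 y) = fun y => ω y - Cf y := by
      funext y
      rw [zero_add, hCf_def]
      congr 1
      rw [hp_def]
      have hcoeff : ∀ k, (FormalMultilinearSeries.ofScalars ℂ c).coeff k = c k := by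
        intro k
        have h0 : (FormalMultilinearSeries.ofScalars ℂ c).coeff k
            = FormalMultilinearSeries.ofScalars ℂ c k (fun _ => 1) := rfl
        rw [h0, FormalMultilinearSeries.ofScalars_apply_eq]
        simp
      simp [FormalMultilinearSeries.partialSum, Finset.sum_range_succ, hcoeff, hc0]
      ring
    rw [heq] at h
    have h2 : (fun y : ℂ => ‖y‖ ^ 4) = fun y : ℂ => ‖y ^ 4‖ := by
      funext y; rw [norm_pow]
    rw [h2] at h
    exact h.of_norm_right
  have hFQ : (fun z => F z - Qf z) =O[𝓝 0] fun z : ℂ => z ^ 4 := by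
    have h1 : (fun z : ℂ => Cf z - Qf z - Qf z * Cf z) =O[𝓝 0] fun z : ℂ => z ^ 4 := by
      have heq : (fun z : ℂ => Cf z - Qf z - Qf z * Cf z) = fun z : ℂ =>
          z ^ 4 * (-(c 1 * c 3 + d2 * c 2 + b * c 1) - (d2 * c 3 + b * c 2) * z
            - b * c 3 * z ^ 2) := by
        funext z
        rw [hCf_def, hQf_def, hd2_def, hb_def]
        ring
      rw [heq]
      refine aux_mul_bigO_pow 4 ?_
      exact (continuous_const.sub (continuous_const.mul continuous_id)).sub
        (continuous_const.mul (continuous_pow 2))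
    have h2 : (fun z : ℂ => (ω z - Cf z) * (1 - Qf z)) =O[𝓝 0] fun z : ℂ => z ^ 4 := by
      have hq1 : (fun z : ℂ => 1 - Qf z) =O[𝓝 (0:ℂ)] fun _ => (1 : ℂ) := by
        have hcont : Continuous fun z : ℂ => 1 - Qf z := by
          rw [hQf_def]
          exact (continuous_const.sub (((continuous_const.mul continuous_id).add
            (continuous_const.mul (continuous_pow 2))).add
            (continuous_const.mul (continuous_pow 3))))
        exact (hcont.tendsto 0).isBigO_one ℂ
      simpa using hE.mul hq1
    have h3 : (fun z : ℂ => (1 + ω z)⁻¹) =O[𝓝 (0:ℂ)] fun _ => (1 : ℂ) := by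
      have h31 : Tendsto (fun z => 1 + ω z) (𝓝 0) (𝓝 (1 + ω 0)) :=
        tendsto_const_nhds.add hωcont.tendsto
      rw [hω0, add_zero] at h31
      exact (h31.inv₀ one_ne_zero).isBigO_one ℂ
    have h4 := ((h1.add h2).mul h3)
    have heq2 : ∀ᶠ z in 𝓝 (0 : ℂ),
        ((Cf z - Qf z - Qf z * Cf z) + (ω z - Cf z) * (1 - Qf z)) * (1 + ω z)⁻¹
          = F z - Qf z := by
      filter_upwards [hball_nhds] with z hz
      have hd := hden z hz
      rw [hF_def]
      field_simp
      ring
    have h5 := h4.congr' heq2 (by filter_upwards with z; rw [mul_one])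
    exact h5
  have hrotO : ∀ u : ℂ, ‖u‖ = 1 →
      (fun z => F (u * z) - Qf (u * z)) =O[𝓝 0] fun z : ℂ => z ^ 4 := by
    intro u hu
    have htu : Tendsto (fun z : ℂ => u * z) (𝓝 0) (𝓝 0) := by
      have h := (continuous_mul_left u).tendsto 0
      rwa [mul_zero] at h
    have := hFQ.comp_tendsto htu
    simp only [Function.comp_def] at this
    refine this.trans ?_
    have heq : (fun z : ℂ => (u * z) ^ 4) = fun z : ℂ => u ^ 4 * z ^ 4 := by
      funext z; ring
    rw [heq]
    exact isBigO_const_mul_self (u ^ 4) (fun z : ℂ => z ^ 4) (𝓝 0)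
  have hQsum : ∀ z : ℂ, Qf z + Qf (η * z) + Qf (η ^ 2 * z) = 3 * (b * z ^ 3) := by
    intro z
    rw [hQf_def]
    linear_combination (c 1 * z + d2 * z ^ 2 * (η ^ 2 - η + 1)
      + b * z ^ 3 * (η - 1) * (η ^ 3 + 2)) * hη2
  have hA_asym : (fun z => A z - b * z ^ 3) =O[𝓝 0] fun z : ℂ => z ^ 4 := by
    have hs := ((hFQ.add (hrotO η hηabs)).add (hrotO (η ^ 2) hη2abs)).const_mul_left (1/3 : ℂ)
    have heq : (fun z : ℂ => (1/3 : ℂ) * ((F z - Qf z) + (F (η * z) - Qf (η * z))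
        + (F (η ^ 2 * z) - Qf (η ^ 2 * z)))) = fun z => A z - b * z ^ 3 := by
      funext z
      rw [hA_def]
      linear_combination (-(1/3 : ℂ)) * hQsum z
    rw [heq] at hs
    exact hs
  have hA_O3 : A =O[𝓝 0] fun z : ℂ => z ^ 3 := by
    have h1 : (fun z : ℂ => b * z ^ 3) =O[𝓝 0] fun z : ℂ => z ^ 3 :=
      isBigO_const_mul_self b _ _
    have h2 := (hA_asym.trans (aux_pow_bigO (by norm_num))).add h1
    have heq : (fun z : ℂ => (A z - b * z ^ 3) + b * z ^ 3) = A := by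
      funext z; ring
    rwa [heq] at h2
  have hAtend : Tendsto A (𝓝 0) (𝓝 0) :=
    hA_O3.trans_tendsto (by simpa using (continuous_pow 3 (M := ℂ)).tendsto' 0 0 (by simp))
  have hG_asym : (fun z => G z - b * z ^ 3) =o[𝓝 0] fun z : ℂ => z ^ 3 := by
    have hinv : (fun z : ℂ => (1 - A z)⁻¹) =O[𝓝 (0:ℂ)] fun _ => (1 : ℂ) := by
      have hi1 : Tendsto (fun z => 1 - A z) (𝓝 0) (𝓝 (1 - 0)) :=
        tendsto_const_nhds.sub hAtend
      rw [sub_zero] at hi1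
      exact (hi1.inv₀ one_ne_zero).isBigO_one ℂ
    have hsq : (fun z : ℂ => A z * A z) =O[𝓝 0] fun z : ℂ => z ^ 4 := by
      have := hA_O3.mul hA_O3
      have heq : (fun z : ℂ => z ^ 3 * z ^ 3) = fun z : ℂ => z ^ 6 := by
        funext z; ring
      rw [heq] at this
      exact this.trans (aux_pow_bigO (by norm_num))
    have h2 : (fun z : ℂ => A z * A z * (1 - A z)⁻¹) =O[𝓝 0] fun z : ℂ => z ^ 4 := by
      simpa using hsq.mul hinv
    have heq : ∀ᶠ z in 𝓝 (0 : ℂ),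
        (A z - b * z ^ 3) + A z * A z * (1 - A z)⁻¹ = G z - b * z ^ 3 := by
      filter_upwards [hball_nhds] with z hz
      have hd := hAden z hz
      rw [hG_def]
      field_simp
      ring
    have hO := (hA_asym.add h2).congr' heq (by filter_upwards with z; rfl)
    refine hO.trans_isLittleO ?_
    have hid : (fun z : ℂ => z) =o[𝓝 (0:ℂ)] fun _ => (1 : ℂ) :=
      (isLittleO_one_iff ℂ).mpr tendsto_id
    have := (isBigO_refl (fun z : ℂ => z ^ 3) (𝓝 0)).mul_isLittleO hid
    have heq1 : (fun z : ℂ => z ^ 3 * z) = fun z : ℂ => z ^ 4 := by funext z; ring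
    have heq2 : (fun z : ℂ => z ^ 3 * 1) = fun z : ℂ => z ^ 3 := by funext z; ring
    rwa [heq1, heq2] at this
  have := coeff3_bound G b hGdiff hGlt hG0 hG_asym
  exact this
end

section
/- Let ω(z) = c₁z + c₂z² + ⋯ be a Schwarz function. Then |c₃ - (2/19)c₁c₂ + c₁³| ≤ 1. -/
open Complex Metric FormalMultilinearSeries Filter
open Complex Metric FormalMultilinearSeries Filter Set
lemma hasFPSOB {ω : ℂ → ℂ} {c : ℕ → ℂ}
    (hsum : ∀ z ∈ ball (0 : ℂ) 1, HasSum (fun n => c n * z ^ n) (ω z)) :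
    HasFPowerSeriesOnBall ω (ofScalars ℂ c) 0 1 := by
  constructor
  · refine ENNReal.le_of_forall_nnreal_lt (fun r hr => ?_)
    have hr1 : (r : ℝ) < 1 := by exact_mod_cast hr
    have hz : ((r : ℝ) : ℂ) ∈ ball (0 : ℂ) 1 := by
      simp only [mem_ball, dist_zero_right, Complex.norm_real, Real.norm_eq_abs]
      rwa [_root_.abs_of_nonneg r.coe_nonneg]
    have hs : Tendsto (fun n => c n * ((r : ℝ) : ℂ) ^ n) atTop (nhds 0) :=
      (hsum _ hz).summable.tendsto_atTop_zero
    refine le_radius_of_tendsto _ (l := 0) ?_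
    have h2 := hs.norm
    simp only [norm_zero] at h2
    convert h2 using 2 with n
    rw [ofScalars_norm, norm_mul, norm_pow, Complex.norm_real, Real.norm_eq_abs,
      _root_.abs_of_nonneg r.coe_nonneg]
  · exact one_pos
  · intro y hy
    have hy' : y ∈ ball (0 : ℂ) 1 := by
      rw [EMetric.mem_ball, edist_zero_right] at hy
      rw [mem_ball, dist_zero_right]
      simpa [enorm_eq_nnnorm, ← NNReal.coe_lt_coe] using hy
    have := hsum y hy'
    simp only [zero_add]
    convert this using 2 with n
    rfl
    rw [ofScalars_apply_eq]
    simp [smul_eq_mul]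

lemma coeff_eq {ω : ℂ → ℂ} {c : ℕ → ℂ}
    (h : HasFPowerSeriesOnBall ω (ofScalars ℂ c) 0 1) (n : ℕ) :
    (n.factorial : ℂ) * c n = iteratedDeriv n ω 0 := by
  have h2 := h.factorial_smul (1 : ℂ) n
  rw [ofScalars_apply_eq] at h2
  rw [iteratedDeriv_eq_iteratedFDeriv, ← h2]
  simp [smul_eq_mul, mul_comm]
lemma mobius_bound {a w : ℂ} (ha : ‖a‖ < 1) (hw : ‖w‖ ≤ 1) :
    ‖w - a‖ ≤ ‖1 - (starRingEnd ℂ) a * w‖ := by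
  have hna : normSq a < 1 := by rw [← Complex.sq_norm]; nlinarith [norm_nonneg a]
  have hnw : normSq w ≤ 1 := by nlinarith [Complex.sq_norm w, norm_nonneg w]
  have key : normSq (1 - (starRingEnd ℂ) a * w) - normSq (w - a)
      = (1 - normSq a) * (1 - normSq w) := by
    simp only [normSq_apply, Complex.sub_re, Complex.sub_im, Complex.mul_re, Complex.mul_im,
      Complex.one_re, Complex.one_im, Complex.conj_re, Complex.conj_im]
    ring
  rw [Complex.norm_def, Complex.norm_def]
  apply Real.sqrt_le_sqrt
  nlinarith
lemma mobius_ne {a w : ℂ} (ha : ‖a‖ < 1) (hw : ‖w‖ ≤ 1) :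
    1 - (starRingEnd ℂ) a * w ≠ 0 := by
  intro h
  have h1 : (1:ℂ) = (starRingEnd ℂ) a * w := by linear_combination h
  have : ‖(starRingEnd ℂ) a * w‖ < 1 := by
    rw [norm_mul, Complex.norm_conj]
    nlinarith [norm_nonneg a, norm_nonneg w]
  rw [← h1] at this
  simp at this
lemma dslope_deriv_facts {f : ℂ → ℂ} (hf : DifferentiableOn ℂ f (ball 0 1)) (h0 : f 0 = 0) :
    dslope f 0 0 = deriv f 0 ∧
    deriv (dslope f 0) 0 = iteratedDeriv 2 f 0 / 2 ∧
    iteratedDeriv 2 (dslope f 0) 0 = iteratedDeriv 3 f 0 / 3 := by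
  set g := dslope f 0 with hg
  have hmem : ball (0:ℂ) 1 ∈ nhds (0:ℂ) := ball_mem_nhds _ one_pos
  have hgd : DifferentiableOn ℂ g (ball 0 1) := (differentiableOn_dslope hmem).mpr hf
  have hga : AnalyticOnNhd ℂ g (ball 0 1) := hgd.analyticOnNhd isOpen_ball
  have hga' : AnalyticOnNhd ℂ (deriv g) (ball 0 1) := hga.deriv
  have hga'' : AnalyticOnNhd ℂ (deriv (deriv g)) (ball 0 1) := hga'.deriv
  have hfg : f = fun z => z * g z := by
    funext z
    have := sub_smul_dslope f 0 z
    rw [h0, sub_zero, sub_zero, smul_eq_mul] at this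
    exact this.symm
  have hd1 : EqOn (deriv f) (fun z => g z + z * deriv g z) (ball 0 1) := by
    intro z hz
    have h := (hasDerivAt_id z).mul ((hga z hz).differentiableAt.hasDerivAt)
    rw [hfg]
    simp only [id_eq, Pi.mul_def, Pi.add_def] at h
    rw [h.deriv]
    ring
  have hd2 : EqOn (deriv (deriv f)) (fun z => 2 * deriv g z + z * deriv (deriv g) z)
      (ball 0 1) := by
    intro z hz
    have he : deriv f =ᶠ[nhds z] fun w => g w + w * deriv g w :=
      hd1.eventuallyEq_of_mem (isOpen_ball.mem_nhds hz)
    rw [he.deriv_eq]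
    have h := ((hga z hz).differentiableAt.hasDerivAt).add
      ((hasDerivAt_id z).mul ((hga' z hz).differentiableAt.hasDerivAt))
    simp only [id_eq, Pi.mul_def, Pi.add_def] at h
    rw [h.deriv]
    ring
  have h00 : (0:ℂ) ∈ ball (0:ℂ) 1 := mem_ball_self one_pos
  refine ⟨dslope_same f 0, ?_, ?_⟩
  · rw [iteratedDeriv_succ, iteratedDeriv_one]
    have he : deriv f =ᶠ[nhds 0] fun w => g w + w * deriv g w :=
      hd1.eventuallyEq_of_mem hmem
    rw [he.deriv_eq]
    have h := ((hga 0 h00).differentiableAt.hasDerivAt).add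
      ((hasDerivAt_id 0).mul ((hga' 0 h00).differentiableAt.hasDerivAt))
    simp only [id_eq, Pi.mul_def, Pi.add_def] at h
    rw [h.deriv]
    ring
  · have e3 : iteratedDeriv 3 f 0 = deriv (deriv (deriv f)) 0 := by
      rw [show (3:ℕ) = 2 + 1 from rfl, iteratedDeriv_succ, iteratedDeriv_succ,
        iteratedDeriv_one]
    rw [e3]
    have he : deriv (deriv f) =ᶠ[nhds 0] fun w => 2 * deriv g w + w * deriv (deriv g) w :=
      hd2.eventuallyEq_of_mem hmem
    rw [he.deriv_eq]
    have h := ((hasDerivAt_const (0:ℂ) (2:ℂ)).mul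
        ((hga' 0 h00).differentiableAt.hasDerivAt)).add
      ((hasDerivAt_id 0).mul ((hga'' 0 h00).differentiableAt.hasDerivAt))
    simp only [id_eq, Pi.mul_def, Pi.add_def] at h
    rw [h.deriv, iteratedDeriv_succ, iteratedDeriv_one]
    ring

lemma norm_dslope_le_one {F : ℂ → ℂ} (hFd : DifferentiableOn ℂ F (ball 0 1))
    (hF0 : F 0 = 0) (hFb : ∀ z ∈ ball (0:ℂ) 1, ‖F z‖ ≤ 1)
    {z : ℂ} (hz : z ∈ ball (0:ℂ) 1) : ‖dslope F 0 z‖ ≤ 1 := by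
  have key : ∀ r : ℝ, 1 < r → ‖dslope F 0 z‖ ≤ r := by
    intro r hr
    have maps : MapsTo F (ball 0 1) (closedBall (F 0) r) := by
      intro w hw
      rw [hF0, mem_closedBall, dist_zero_right]
      exact (lt_of_le_of_lt (hFb w hw) hr).le
    have := Complex.norm_dslope_le_div_of_mapsTo_ball hFd maps hz
    simpa using this
  exact le_of_forall_gt_imp_ge_of_dense fun r hr => key r hr

lemma schur_step {h : ℂ → ℂ} (hd : DifferentiableOn ℂ h (ball 0 1))
    (hb : ∀ z ∈ ball (0:ℂ) 1, ‖h z‖ ≤ 1) (ha : ‖h 0‖ < 1) :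
    ∃ h₁ : ℂ → ℂ, DifferentiableOn ℂ h₁ (ball 0 1) ∧
      (∀ z ∈ ball (0:ℂ) 1, ‖h₁ z‖ ≤ 1) ∧
      h₁ 0 = deriv h 0 / (1 - (starRingEnd ℂ) (h 0) * h 0) ∧
      deriv h₁ 0 = ((iteratedDeriv 2 h 0 / 2) * (1 - (starRingEnd ℂ) (h 0) * h 0)
          + (starRingEnd ℂ) (h 0) * (deriv h 0)^2) / (1 - (starRingEnd ℂ) (h 0) * h 0)^2 := by
  have hmem : ball (0:ℂ) 1 ∈ nhds (0:ℂ) := ball_mem_nhds _ one_pos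
  have h00 : (0:ℂ) ∈ ball (0:ℂ) 1 := mem_ball_self one_pos
  set a := h 0 with haa
  set den : ℂ → ℂ := fun z => 1 - (starRingEnd ℂ) a * h z with hden_def
  have hden : ∀ z ∈ ball (0:ℂ) 1, den z ≠ 0 := fun z hz => mobius_ne ha (hb z hz)
  have hd0 : den 0 ≠ 0 := hden 0 h00
  set F := fun z => (h z - a) / den z with hF_def
  have hFd : DifferentiableOn ℂ F (ball 0 1) := by
    apply DifferentiableOn.div
    · exact hd.sub (differentiableOn_const a)
    · exact (differentiableOn_const 1).sub ((differentiableOn_const _).mul hd)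
    · exact hden
  have hF0 : F 0 = 0 := by simp [hF_def, haa]
  have hFb : ∀ z ∈ ball (0:ℂ) 1, ‖F z‖ ≤ 1 := by
    intro z hz
    rw [hF_def]
    simp only [norm_div]
    exact div_le_one_of_le₀ (mobius_bound ha (hb z hz)) (norm_nonneg _)
  have hA : AnalyticOnNhd ℂ h (ball 0 1) := hd.analyticOnNhd isOpen_ball
  -- derivative of F on the ball
  have hderivF : EqOn (deriv F) (fun z => deriv h z * (1 - (starRingEnd ℂ) a * a) / (den z)^2)
      (ball 0 1) := by
    intro z hz
    have hh' : HasDerivAt h (deriv h z) z := (hA z hz).differentiableAt.hasDerivAt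
    have hnum : HasDerivAt (fun w => h w - a) (deriv h z) z := hh'.sub_const a
    have hden' : HasDerivAt den (-((starRingEnd ℂ) a * deriv h z)) z := by
      simpa using (hh'.const_mul ((starRingEnd ℂ) a)).const_sub 1
    have hdiv := hnum.div hden' (hden z hz)
    simp only [Pi.div_def] at hdiv
    rw [hF_def]
    rw [hdiv.deriv]
    rw [hden_def]
    field_simp
    ring
  refine ⟨dslope F 0, (differentiableOn_dslope hmem).mpr hFd,
    fun z hz => norm_dslope_le_one hFd hF0 hFb hz, ?_, ?_⟩
  · rw [dslope_same]
    have hh' : HasDerivAt h (deriv h 0) 0 := (hA 0 h00).differentiableAt.hasDerivAt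
    have hnum : HasDerivAt (fun w => h w - a) (deriv h 0) 0 := hh'.sub_const a
    have hden' : HasDerivAt den (-((starRingEnd ℂ) a * deriv h 0)) 0 := by
      simpa using (hh'.const_mul ((starRingEnd ℂ) a)).const_sub 1
    have hdiv := hnum.div hden' hd0
    simp only [Pi.div_def] at hdiv
    rw [hF_def]
    rw [hdiv.deriv]
    have hz0 : h 0 - a = 0 := by rw [haa]; ring
    rw [hz0]
    rw [show den 0 = 1 - (starRingEnd ℂ) a * a by rw [hden_def]]
    have hD : (1 - (starRingEnd ℂ) a * a) ≠ 0 := hd0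
    field_simp
    ring
  · obtain ⟨-, hd2, -⟩ := dslope_deriv_facts hFd hF0
    rw [hd2]
    -- compute iteratedDeriv 2 F 0 = deriv (deriv F) 0
    have e2 : iteratedDeriv 2 F 0 = deriv (deriv F) 0 := by
      rw [iteratedDeriv_succ, iteratedDeriv_one]
    rw [e2]
    have he : deriv F =ᶠ[nhds 0]
        (fun z => deriv h z * (1 - (starRingEnd ℂ) a * a) / (den z)^2) :=
      hderivF.eventuallyEq_of_mem hmem
    rw [he.deriv_eq]
    have hh' : HasDerivAt h (deriv h 0) 0 := (hA 0 h00).differentiableAt.hasDerivAt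
    have hh'' : HasDerivAt (deriv h) (iteratedDeriv 2 h 0) 0 := by
      have := (hA.deriv 0 h00).differentiableAt.hasDerivAt
      rwa [show deriv (deriv h) 0 = iteratedDeriv 2 h 0 by
        rw [iteratedDeriv_succ, iteratedDeriv_one]] at this
    have hnum : HasDerivAt (fun z => deriv h z * (1 - (starRingEnd ℂ) a * a))
        (iteratedDeriv 2 h 0 * (1 - (starRingEnd ℂ) a * a)) 0 := hh''.mul_const _
    have hdenAt : HasDerivAt den (-((starRingEnd ℂ) a * deriv h 0)) 0 := by
      simpa using (hh'.const_mul ((starRingEnd ℂ) a)).const_sub 1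
    have hden2 : HasDerivAt (fun z => (den z)^2)
        (2 * den 0 * (-((starRingEnd ℂ) a * deriv h 0))) 0 := by
      have := hdenAt.pow 2
      simpa [pow_one, mul_comm, Pi.pow_def] using this
    have hd20 : (den 0)^2 ≠ 0 := pow_ne_zero 2 hd0
    have hdiv := hnum.div hden2 hd20
    simp only [Pi.div_def] at hdiv
    rw [hdiv.deriv]
    have hden0 : den 0 = 1 - (starRingEnd ℂ) a * a := by rw [hden_def]
    have hD : (1 - (starRingEnd ℂ) a * a) ≠ 0 := hden0 ▸ hd0
    rw [hden0]
    field_simp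
    ring
lemma max_principle_derivs {h : ℂ → ℂ} (hd : DifferentiableOn ℂ h (ball 0 1))
    (hb : ∀ z ∈ ball (0:ℂ) 1, ‖h z‖ ≤ 1) (h1 : ‖h 0‖ = 1) :
    deriv h 0 = 0 ∧ iteratedDeriv 2 h 0 = 0 := by
  have h00 : (0:ℂ) ∈ ball (0:ℂ) 1 := mem_ball_self one_pos
  have hmax : IsMaxOn (norm ∘ h) (ball 0 1) 0 := by
    intro z hz
    simp only [Function.comp_apply, h1]
    exact hb z hz
  have heq : EqOn h (Function.const ℂ (h 0)) (ball 0 1) :=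
    Complex.eqOn_of_isPreconnected_of_isMaxOn_norm (convex_ball _ _).isPreconnected
      isOpen_ball hd h00 hmax
  have hmem : ball (0:ℂ) 1 ∈ nhds (0:ℂ) := ball_mem_nhds _ one_pos
  have hd1 : deriv h 0 = 0 := by
    rw [(heq.eventuallyEq_of_mem hmem).deriv_eq]
    exact deriv_const _ _
  have hder : EqOn (deriv h) (fun _ => (0:ℂ)) (ball 0 1) := by
    intro z hz
    rw [(heq.eventuallyEq_of_mem (isOpen_ball.mem_nhds hz)).deriv_eq]
    exact deriv_const _ _
  refine ⟨hd1, ?_⟩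
  rw [iteratedDeriv_succ, iteratedDeriv_one,
    (hder.eventuallyEq_of_mem hmem).deriv_eq]
  simp

lemma q_nonneg {t s : ℝ} (ht0 : 0 ≤ t) (ht : t ≤ 1) (hs0 : 0 ≤ s) (hs : s ≤ 1 - t^2) :
    0 ≤ 19*s^2 - 2*t*(1+t)*s + 19*t^2*(1+t)*(1-t) := by
  rcases le_total t (19/20) with hc | hc
  · nlinarith [sq_nonneg (19*s - t*(1+t)), sq_nonneg t, mul_nonneg (mul_nonneg ht0 ht0) (sub_nonneg.2 ht)]
  · have hσ : 0 ≤ (1 - t^2) - s := by linarith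
    have hf2 : 0 ≤ 2*t*(1+t) - 19*(s + (1-t^2)) := by nlinarith
    nlinarith [mul_nonneg hσ hf2, mul_nonneg (mul_nonneg (sub_nonneg.2 ht) (sq_nonneg (1+t))) (by nlinarith : (0:ℝ) ≤ 19 - 2*t - 2*t^2)]

lemma final_ineq {t s u : ℝ} (ht0 : 0 ≤ t) (ht : t < 1) (hs0 : 0 ≤ s) (hs : s ≤ 1 - t^2)
    (hu0 : 0 ≤ u) (hu : u ≤ (1-t^2)^2 - s^2) :
    (u + t*s^2)/(1-t^2) + (2/19)*t*s + t^3 ≤ 1 := by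
  have hd : (0:ℝ) < 1 - t^2 := by nlinarith
  have hq := q_nonneg ht0 ht.le hs0 hs
  have key : u + t*s^2 ≤ (1 - (2/19)*t*s - t^3) * (1-t^2) := by nlinarith [mul_nonneg (sub_nonneg.2 ht.le) hq]
  have h2 : (u + t*s^2)/(1-t^2) ≤ 1 - (2/19)*t*s - t^3 := (div_le_iff₀ hd).mpr key
  linarith

theorem schwarz_coeff_bound_1 (ω : ℂ → ℂ) (c : ℕ → ℂ)
    (hc0 : c 0 = 0)
    (hsum : ∀ z ∈ ball (0 : ℂ) 1, HasSum (fun n => c n * z ^ n) (ω z))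
    (hω : ∀ z ∈ ball (0 : ℂ) 1, ‖ω z‖ < 1) :
    ‖c 3 - (2/19) * c 1 * c 2 + c 1 ^ 3‖ ≤ 1 := by
  have h00 : (0:ℂ) ∈ ball (0:ℂ) 1 := mem_ball_self one_pos
  have hps := hasFPSOB hsum
  have hcoeff := coeff_eq hps
  have hωd : DifferentiableOn ℂ ω (ball 0 1) := by
    have := hps.differentiableOn
    have e : eball (0:ℂ) 1 = ball (0:ℂ) 1 := by
      ext z
      rw [EMetric.mem_ball, mem_ball, edist_dist, ← ENNReal.ofReal_one,
        ENNReal.ofReal_lt_ofReal_iff one_pos]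
    rwa [e] at this
  have hω0 : ω 0 = 0 := by
    have h1 := hsum 0 h00
    have h2 : HasSum (fun n => c n * (0:ℂ) ^ n) (c 0 * (0:ℂ) ^ 0) :=
      hasSum_single 0 (fun b hb => by simp [zero_pow hb])
    have := h1.unique h2
    simpa [hc0] using this
  set g := dslope ω 0 with hg_def
  have hmem : ball (0:ℂ) 1 ∈ nhds (0:ℂ) := ball_mem_nhds _ one_pos
  have hgd : DifferentiableOn ℂ g (ball 0 1) := (differentiableOn_dslope hmem).mpr hωd
  have hgb : ∀ z ∈ ball (0:ℂ) 1, ‖g z‖ ≤ 1 :=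
    fun z hz => norm_dslope_le_one hωd hω0 (fun w hw => (hω w hw).le) hz
  obtain ⟨e1, e2, e3⟩ := dslope_deriv_facts hωd hω0
  have hc1 : g 0 = c 1 := by
    rw [hg_def, e1, ← iteratedDeriv_one, ← hcoeff 1]
    simp [Nat.factorial]
  have hc2 : deriv g 0 = c 2 := by
    rw [hg_def, e2, ← hcoeff 2]
    norm_num [Nat.factorial]
  have hc3 : iteratedDeriv 2 g 0 = 2 * c 3 := by
    rw [hg_def, e3, ← hcoeff 3]
    norm_num [Nat.factorial]
    ring
  set t := ‖c 1‖ with ht_def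
  have ht0 : 0 ≤ t := norm_nonneg _
  have ht1 : t ≤ 1 := by rw [ht_def, ← hc1]; exact hgb 0 h00
  by_cases hlt : t < 1
  · -- main case
    have hd0R : (0:ℝ) < 1 - t^2 := by nlinarith
    have ha : ‖g 0‖ < 1 := by rwa [hc1]
    obtain ⟨h₁, h₁d, h₁b, h₁0, h₁'⟩ := schur_step hgd hgb ha
    rw [hc1, hc2] at h₁0
    rw [hc1, hc2, hc3] at h₁'
    set d : ℂ := 1 - (starRingEnd ℂ) (c 1) * c 1 with hd_def
    have hdval : d = ((1 - t^2 : ℝ) : ℂ) := by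
      rw [hd_def, ht_def]
      rw [← Complex.normSq_eq_conj_mul_self, Complex.normSq_eq_norm_sq]
      push_cast
      ring
    have habsd : ‖d‖ = 1 - t^2 := by
      rw [hdval, Complex.norm_real, Real.norm_eq_abs, _root_.abs_of_nonneg hd0R.le]
    have hdne : d ≠ 0 := by
      rw [hdval]
      exact_mod_cast (Complex.ofReal_ne_zero).mpr hd0R.ne'
    set s := ‖c 2‖ with hs_def
    have hs0 : 0 ≤ s := norm_nonneg _
    have habs_h₁0 : ‖h₁ 0‖ = s / (1 - t^2) := by
      rw [h₁0, norm_div, habsd]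
    have hs_le : s ≤ 1 - t^2 := by
      have := h₁b 0 h00
      rw [habs_h₁0, div_le_one hd0R] at this
      exact this
    -- bound on deriv h₁ 0
    have habs1 : ‖deriv h₁ 0‖ ≤ 1 - (‖h₁ 0‖)^2 := by
      by_cases h2lt : ‖h₁ 0‖ < 1
      · obtain ⟨h₂, -, h₂b, h₂0, -⟩ := schur_step h₁d h₁b h2lt
        have hb2 : ‖h₂ 0‖ ≤ 1 := h₂b 0 h00
        rw [h₂0] at hb2
        have hd₁val : (1 - (starRingEnd ℂ) (h₁ 0) * h₁ 0)
            = ((1 - (‖h₁ 0‖)^2 : ℝ) : ℂ) := by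
          rw [← Complex.normSq_eq_conj_mul_self, Complex.normSq_eq_norm_sq]
          push_cast
          ring
        have hpos : (0:ℝ) < 1 - (‖h₁ 0‖)^2 := by
          nlinarith [norm_nonneg (h₁ 0)]
        rw [norm_div, hd₁val, Complex.norm_real, Real.norm_eq_abs, _root_.abs_of_nonneg hpos.le,
          div_le_one hpos] at hb2
        linarith
      · have heq1 : ‖h₁ 0‖ = 1 := le_antisymm (h₁b 0 h00) (not_lt.mp h2lt)
        obtain ⟨hz, -⟩ := max_principle_derivs h₁d h₁b heq1
        rw [hz, heq1]
        simp
    rw [habs_h₁0] at habs1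
    set A := ‖deriv h₁ 0‖ with hA_def
    have hA0 : 0 ≤ A := norm_nonneg _
    set u : ℝ := A * (1-t^2)^2 with hu_def
    have hu0 : 0 ≤ u := mul_nonneg hA0 (sq_nonneg _)
    have hu : u ≤ (1-t^2)^2 - s^2 := by
      have h3 := mul_le_mul_of_nonneg_right habs1 (sq_nonneg (1-t^2))
      have h4 : (1 - (s / (1 - t ^ 2)) ^ 2) * (1 - t ^ 2) ^ 2 = (1-t^2)^2 - s^2 := by
        field_simp
      rw [h4] at h3
      exact h3
    -- decomposition and triangle inequality
    have decomp : c 3 - (2/19) * c 1 * c 2 + c 1 ^ 3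
        = (deriv h₁ 0 * d) + (-((starRingEnd ℂ) (c 1) * c 2^2 / d))
          + (-((2/19) * c 1 * c 2)) + c 1 ^ 3 := by
      rw [h₁']
      field_simp
      ring
    have habsX1 : ‖deriv h₁ 0 * d‖ = A * (1-t^2) := by
      rw [norm_mul, habsd]
    have habsX2 : ‖-((starRingEnd ℂ) (c 1) * c 2^2 / d)‖
        = t * s^2 / (1-t^2) := by
      rw [norm_neg, norm_div, norm_mul, norm_pow, Complex.norm_conj, habsd, ← ht_def,
        ← hs_def]
    have habsX3 : ‖-((2/19 : ℂ) * c 1 * c 2)‖ = (2/19) * t * s := by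
      have h219 : ‖(2/19 : ℂ)‖ = 2/19 := by
        rw [show ((2:ℂ)/19) = (((2/19 : ℝ)) : ℂ) by norm_num, Complex.norm_real, Real.norm_eq_abs]
        norm_num
      rw [norm_neg, norm_mul, norm_mul, h219, ← ht_def, ← hs_def]
    have habsX4 : ‖c 1 ^ 3‖ = t^3 := by rw [norm_pow, ← ht_def]
    have tri : ‖c 3 - (2/19) * c 1 * c 2 + c 1 ^ 3‖
        ≤ A * (1-t^2) + t * s^2 / (1-t^2) + (2/19) * t * s + t^3 := by
      rw [decomp]
      calc ‖_‖ ≤ ‖(deriv h₁ 0 * d) + (-((starRingEnd ℂ) (c 1) * c 2^2 / d))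
          + (-((2/19) * c 1 * c 2))‖ + ‖c 1 ^ 3‖ := norm_add_le _ _
        _ ≤ ‖(deriv h₁ 0 * d) + (-((starRingEnd ℂ) (c 1) * c 2^2 / d))‖
            + ‖-((2/19) * c 1 * c 2)‖ + ‖c 1 ^ 3‖ := by
            gcongr
            exact norm_add_le _ _
        _ ≤ ‖deriv h₁ 0 * d‖ + ‖-((starRingEnd ℂ) (c 1) * c 2^2 / d)‖
            + ‖-((2/19) * c 1 * c 2)‖ + ‖c 1 ^ 3‖ := by
            gcongr
            exact norm_add_le _ _
        _ = A * (1-t^2) + t * s^2 / (1-t^2) + (2/19) * t * s + t^3 := by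
            rw [habsX1, habsX2, habsX3, habsX4]
    have hfin := final_ineq ht0 hlt hs0 hs_le hu0 hu
    have hdiv_eq : (u + t*s^2)/(1-t^2) = A * (1-t^2) + t * s^2 / (1-t^2) := by
      rw [hu_def]
      field_simp
    rw [hdiv_eq] at hfin
    linarith
  · -- boundary case |c 1| = 1
    have heq : t = 1 := le_antisymm ht1 (not_lt.mp hlt)
    have heqa : ‖g 0‖ = 1 := by rwa [hc1]
    obtain ⟨hz1, hz2⟩ := max_principle_derivs hgd hgb heqa
    have hc2' : c 2 = 0 := by rw [← hc2, hz1]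
    have hc3' : c 3 = 0 := by
      have := hz2
      rw [hc3] at this
      linear_combination this / 2
    rw [hc2', hc3']
    simp only [mul_zero, sub_zero, zero_sub, zero_add, neg_zero]
    rw [norm_pow, ← ht_def, heq]
    norm_num
end

section
/- Let ω(z) = c₁z + c₂z² + ⋯ be a Schwarz function. Then |c₄| ≤ 1 - |c₁|² - |c₂|². -/
set_option maxHeartbeats 1000000
open Complex MeasureTheory intervalIntegral Real Metric

noncomputable def E (n : ℤ) (θ : ℝ) : ℂ := Complex.exp (n * θ * I)

@[fun_prop]
lemma contE (n : ℤ) : Continuous (E n) := by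
  unfold E; fun_prop

lemma normE (n : ℤ) (θ : ℝ) : ‖E n θ‖ = 1 := by
  unfold E
  rw [show (n:ℂ) * θ * I = (n * θ : ℝ) * I by push_cast; ring]
  exact Complex.norm_exp_ofReal_mul_I _

lemma mulE (a b : ℤ) (θ : ℝ) : E a θ * E b θ = E (a+b) θ := by
  unfold E; rw [← Complex.exp_add]; push_cast; ring_nf

lemma conjE (n : ℤ) (θ : ℝ) : (starRingEnd ℂ) (E n θ) = E (-n) θ := by
  unfold E
  rw [← Complex.exp_conj]
  congr 1
  simp [Complex.conj_I]

lemma intE (n : ℤ) : (∫ θ in Set.Ioc 0 (2*π), E n θ) = if n = 0 then (2*π:ℂ) else 0 := by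
  rw [← intervalIntegral.integral_of_le (by positivity)]
  split_ifs with h
  · subst h; unfold E; simp
  · have hc : (n : ℂ) * I ≠ 0 := by
      simp [Complex.ext_iff, I_ne_zero, Int.cast_injective.ne_iff]
      exact_mod_cast h
    have h2 := integral_exp_mul_complex (a := (0:ℝ)) (b := 2*π) hc
    have : (fun θ : ℝ => E n θ) = fun θ : ℝ => Complex.exp ((n * I) * θ) := by
      funext θ; unfold E; ring_nf
    rw [this, h2]
    rw [show (n:ℂ) * I * ↑(2*π) = n * (2 * π * I) by push_cast; ring, Complex.exp_int_mul_two_pi_mul_I]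
    simp

noncomputable abbrev mu : Measure ℝ := volume.restrict (Set.Ioc 0 (2*π))

lemma intE' (n : ℤ) : (∫ θ, E n θ ∂mu) = if n = 0 then (2*π:ℂ) else 0 := intE n

lemma intgE (f : ℝ → ℂ) (hf : Continuous f) : Integrable f mu := hf.integrableOn_Ioc


lemma trig3 (a b c : ℂ) (j k l : ℤ) (hjk : j ≠ k) (hjl : j ≠ l) (hkl : k ≠ l) :
    (∫ θ, (a * E j θ + b * E k θ + c * E l θ) *
        (starRingEnd ℂ) (a * E j θ + b * E k θ + c * E l θ) ∂mu)
      = 2*π*((normSq a : ℂ) + normSq b + normSq c) := by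
  classical
  set cj := starRingEnd ℂ with hcj
  let w : Fin 9 → ℂ := ![a * cj a, a * cj b, a * cj c, b * cj a, b * cj b, b * cj c, c * cj a, c * cj b, c * cj c]
  let m : Fin 9 → ℤ := ![j-j, j-k, j-l, k-j, k-k, k-l, l-j, l-k, l-l]
  have expand : ∀ θ : ℝ, (a * E j θ + b * E k θ + c * E l θ) *
        cj (a * E j θ + b * E k θ + c * E l θ)
      = ∑ i : Fin 9, w i * E (m i) θ := by
    intro θ
    simp only [Fin.sum_univ_succ, Finset.univ_eq_empty, Finset.sum_empty, add_zero,
      Matrix.cons_val_zero, Matrix.cons_val_succ, w, m]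
    simp only [hcj, map_add, map_mul, conjE, sub_eq_add_neg, ← mulE]
    ring
  simp only [expand]
  rw [MeasureTheory.integral_finset_sum _
    (fun i _ => intgE (fun θ => w i * E (m i) θ) (continuous_const.mul (contE (m i))))]
  simp only [MeasureTheory.integral_const_mul, intE']
  simp only [Fin.sum_univ_succ, Finset.univ_eq_empty, Finset.sum_empty, add_zero,
    Matrix.cons_val_zero, Matrix.cons_val_succ, w, m]
  simp only [sub_self, eq_self_iff_true, sub_eq_zero, hjk, hjl, hkl, hjk.symm, hjl.symm,
    hkl.symm, ↓reduceIte]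
  simp only [hcj, Complex.mul_conj, mul_zero, add_zero, zero_add]
  ring

lemma summ_norm (c : ℕ → ℂ) (ω : ℂ → ℂ)
    (hsum : ∀ z ∈ ball (0 : ℂ) 1, HasSum (fun n => c n * z ^ n) (ω z))
    (r : ℝ) (hr0 : 0 ≤ r) (hr1 : r < 1) :
    Summable (fun n => ‖c n‖ * r ^ n) := by
  obtain ⟨ρ, hrρ, hρ1⟩ : ∃ ρ, r < ρ ∧ ρ < 1 := ⟨(r+1)/2, by linarith, by linarith⟩
  have hρ0 : 0 < ρ := lt_of_le_of_lt hr0 hrρ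
  have hmem : (ρ : ℂ) ∈ ball (0 : ℂ) 1 := by
    simp [Complex.norm_real, abs_of_pos hρ0, hρ1]
  have hs : Summable (fun n => c n * (ρ:ℂ) ^ n) := (hsum _ hmem).summable
  have ht : Filter.Tendsto (fun n => ‖c n * (ρ:ℂ) ^ n‖) Filter.atTop (nhds 0) :=
    by simpa using (hs.tendsto_atTop_zero).norm
  obtain ⟨N, hN⟩ := (ht.eventually_le_const (by norm_num : (0:ℝ) < 1)).exists_forall_of_atTop
  have hbound : ∀ n, N ≤ n → ‖c n‖ * r ^ n ≤ (r / ρ) ^ n := by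
    intro n hn
    have h1 : ‖c n‖ * ρ ^ n ≤ 1 := by
      have := hN n hn
      rwa [norm_mul, norm_pow, Complex.norm_real, Real.norm_of_nonneg hρ0.le] at this
    have h2 : ‖c n‖ * r ^ n = (‖c n‖ * ρ ^ n) * (r / ρ) ^ n := by
      rw [mul_assoc, ← mul_pow, mul_div_assoc', mul_div_cancel_left₀ r hρ0.ne']
    rw [h2]
    calc (‖c n‖ * ρ ^ n) * (r / ρ) ^ n ≤ 1 * (r/ρ)^n := by
          apply mul_le_mul_of_nonneg_right h1 (by positivity)
      _ = (r/ρ)^n := one_mul _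
  have hgeo : Summable (fun n : ℕ => (r / ρ) ^ n) :=
    summable_geometric_of_lt_one (by positivity) (by rw [div_lt_one hρ0]; exact hrρ)
  rw [← summable_nat_add_iff N]
  apply Summable.of_nonneg_of_le (fun n => by positivity)
    (fun n => hbound (n + N) (by omega))
  exact (summable_nat_add_iff N).2 hgeo

lemma E1pow (n : ℕ) (θ : ℝ) : (E 1 θ)^n = E n θ := by
  unfold E
  rw [← Complex.exp_nat_mul]
  congr 1
  push_cast; ring

lemma zpow (r : ℝ) (n : ℕ) (θ : ℝ) : ((r:ℂ) * E 1 θ)^n = (r:ℂ)^n * E n θ := by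
  rw [mul_pow, E1pow]

lemma mu_univ : (mu Set.univ).toReal = 2*π := by
  show (volume.restrict _ Set.univ).toReal = _
  rw [Measure.restrict_apply_univ, Real.volume_Ioc, ENNReal.toReal_ofReal (by nlinarith [Real.pi_pos])]
  norm_num

lemma coeff_int (c : ℕ → ℂ) (v₂ v₃ : ℂ) (r : ℝ) (hr0 : 0 < r) (hr1 : r < 1) (k : ℤ)
    (hsummable : Summable fun n => ‖c n‖ * r^n) :
    (∫ θ, (∑' n : ℕ, c n * ((r:ℂ) * E 1 θ)^n) *
        ((1 + v₂ * ((r:ℂ) * E 1 θ)^2 + v₃ * ((r:ℂ) * E 1 θ)^3) * E (-k) θ) ∂mu)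
    = ∑' n : ℕ, c n * ((r:ℂ)^n * (if (n:ℤ) - k = 0 then (2*π:ℂ) else 0)
        + v₂ * (r:ℂ)^(n+2) * (if (n:ℤ)+2-k = 0 then (2*π:ℂ) else 0)
        + v₃ * (r:ℂ)^(n+3) * (if (n:ℤ)+3-k = 0 then (2*π:ℂ) else 0)) := by
  set f : ℕ → ℝ → ℂ := fun n θ =>
    c n * (((r:ℂ)^n * E (n-k) θ) + v₂ * ((r:ℂ)^(n+2) * E (n+2-k) θ) + v₃ * ((r:ℂ)^(n+3) * E (n+3-k) θ)) with hf
  have hpt : ∀ θ : ℝ, (∑' n : ℕ, c n * ((r:ℂ) * E 1 θ)^n) *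
      ((1 + v₂ * ((r:ℂ) * E 1 θ)^2 + v₃ * ((r:ℂ) * E 1 θ)^3) * E (-k) θ) = ∑' n, f n θ := by
    intro θ
    rw [← tsum_mul_right]
    congr 1
    funext n
    rw [hf]
    simp only [zpow, sub_eq_add_neg, ← mulE]
    ring
  have hcont : ∀ n, Continuous (f n) := by
    intro n
    rw [hf]
    fun_prop
  have hnormf : ∀ n θ, ‖f n θ‖ ≤ ‖c n‖ * r^n * (1 + ‖v₂‖ + ‖v₃‖) := by
    intro n θ
    rw [hf]
    simp only [norm_mul, norm_pow, normE, Complex.norm_real]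
    calc ‖c n‖ * ‖(r:ℂ)^n * E (↑n-k) θ + v₂ * ((r:ℂ)^(n+2) * E (↑n+2-k) θ) + v₃ * ((r:ℂ)^(n+3) * E (↑n+3-k) θ)‖
        ≤ ‖c n‖ * (‖(r:ℂ)^n * E (↑n-k) θ‖ + ‖v₂ * ((r:ℂ)^(n+2) * E (↑n+2-k) θ)‖ + ‖v₃ * ((r:ℂ)^(n+3) * E (↑n+3-k) θ)‖) := by
          apply mul_le_mul_of_nonneg_left (norm_add₃_le) (norm_nonneg _)
      _ ≤ ‖c n‖ * r^n * (1 + ‖v₂‖ + ‖v₃‖) := by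
          simp only [norm_mul, norm_pow, normE, Complex.norm_real, mul_one,
            Real.norm_of_nonneg hr0.le]
          have h2 : r^(n+2) ≤ r^n := pow_le_pow_of_le_one hr0.le hr1.le (by omega)
          have h3 : r^(n+3) ≤ r^n := pow_le_pow_of_le_one hr0.le hr1.le (by omega)
          nlinarith [mul_le_mul_of_nonneg_left (mul_le_mul_of_nonneg_left h2 (norm_nonneg v₂)) (norm_nonneg (c n)),
            mul_le_mul_of_nonneg_left (mul_le_mul_of_nonneg_left h3 (norm_nonneg v₃)) (norm_nonneg (c n))]
  have hint : ∀ n, Integrable (f n) mu := fun n => intgE _ (hcont n)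
  have hmono : ∀ n, (∫ θ, ‖f n θ‖ ∂mu) ≤ 2*π*(1 + ‖v₂‖ + ‖v₃‖) * (‖c n‖ * r^n) := by
    intro n
    calc (∫ θ, ‖f n θ‖ ∂mu) ≤ ∫ _θ, ‖c n‖ * r^n * (1 + ‖v₂‖ + ‖v₃‖) ∂mu := by
          apply integral_mono (hint n).norm (integrable_const _) (fun θ => hnormf n θ)
      _ = 2*π*(1 + ‖v₂‖ + ‖v₃‖) * (‖c n‖ * r^n) := by
          rw [MeasureTheory.integral_const, smul_eq_mul, measureReal_def, mu_univ]; ring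
  have hsumint : Summable fun n => ∫ θ, ‖f n θ‖ ∂mu := by
    apply Summable.of_nonneg_of_le (fun n => integral_nonneg (fun θ => norm_nonneg _)) hmono
    exact (hsummable.mul_left _)
  simp only [hpt]
  rw [← MeasureTheory.integral_tsum_of_summable_integral_norm hint hsumint]
  congr 1
  funext n
  rw [hf]
  simp only [MeasureTheory.integral_const_mul]
  rw [MeasureTheory.integral_add, MeasureTheory.integral_add]
  · simp only [MeasureTheory.integral_const_mul, intE']
    ring
  · exact intgE _ (by fun_prop)
  · exact intgE _ (by fun_prop)
  · exact Integrable.add (intgE _ (by fun_prop)) (intgE _ (by fun_prop))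
  · exact intgE _ (by fun_prop)

lemma bessel (ω : ℂ → ℂ) (c : ℕ → ℂ)
    (hc0 : c 0 = 0)
    (hsum : ∀ z ∈ ball (0 : ℂ) 1, HasSum (fun n => c n * z ^ n) (ω z))
    (hω : ∀ z ∈ ball (0 : ℂ) 1, ‖ω z‖ < 1)
    (v₂ v₃ : ℂ) (r : ℝ) (hr0 : 0 < r) (hr1 : r < 1) :
    normSq (c 1) * r^2 + normSq (c 2) * r^4 + normSq (c 4 + v₂ * c 2 + v₃ * c 1) * r^8
      ≤ 1 + normSq v₂ * r^4 + normSq v₃ * r^6 := by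
  classical
  have hsummable := summ_norm c ω hsum r hr0.le hr1
  set z : ℝ → ℂ := fun θ => (r:ℂ) * E 1 θ with hz
  have hznorm : ∀ θ, ‖z θ‖ = r := by
    intro θ; rw [hz]; simp only [norm_mul, normE, Complex.norm_real,
      Real.norm_of_nonneg hr0.le, mul_one]
  have hzmem : ∀ θ, z θ ∈ ball (0:ℂ) 1 := by
    intro θ; rw [mem_ball_zero_iff, hznorm]; exact hr1
  set g : ℝ → ℂ := fun θ => ∑' n : ℕ, c n * z θ ^ n with hgdef
  have hterm : ∀ (n : ℕ) (θ : ℝ), ‖c n * z θ ^ n‖ = ‖c n‖ * r ^ n := by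
    intro n θ; rw [norm_mul, norm_pow, hznorm]
  have hgc : Continuous g := by
    apply continuous_tsum (u := fun n => ‖c n‖ * r^n) ?_ hsummable
      (fun n θ => le_of_eq (hterm n θ))
    intro n
    rw [hz]; fun_prop
  have hgle : ∀ θ, ‖g θ‖ ≤ 1 := by
    intro θ
    rw [hgdef]
    simp only
    rw [(hsum _ (hzmem θ)).tsum_eq]
    exact (hω _ (hzmem θ)).le
  set q : ℝ → ℂ := fun θ => 1 + v₂ * z θ ^ 2 + v₃ * z θ ^ 3 with hqdef
  have hqc : Continuous q := by rw [hqdef, hz]; fun_prop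
  set F : ℝ → ℂ := fun θ => g θ * q θ with hFdef
  have hFc : Continuous F := hgc.mul hqc
  set w1 : ℂ := c 1 * (r:ℂ) with hw1
  set w2 : ℂ := c 2 * (r:ℂ)^2 with hw2
  set w4 : ℂ := (c 4 + v₂ * c 2 + v₃ * c 1) * (r:ℂ)^4 with hw4
  -- coefficient identities
  have hIgen : ∀ k : ℤ, (∫ θ, F θ * E (-k) θ ∂mu)
      = ∑' n : ℕ, c n * ((r:ℂ)^n * (if (n:ℤ) - k = 0 then (2*π:ℂ) else 0)
        + v₂ * (r:ℂ)^(n+2) * (if (n:ℤ)+2-k = 0 then (2*π:ℂ) else 0)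
        + v₃ * (r:ℂ)^(n+3) * (if (n:ℤ)+3-k = 0 then (2*π:ℂ) else 0)) := by
    intro k
    rw [← coeff_int c v₂ v₃ r hr0 hr1 k hsummable]
    congr 1
    funext θ
    rw [hFdef]
    simp only [hgdef, hqdef, hz]
    ring
  have hI1 : (∫ θ, F θ * E (-1) θ ∂mu) = 2*π*w1 := by
    rw [hIgen 1, tsum_eq_sum (s := {1}) ?_]
    · rw [Finset.sum_singleton]
      norm_num [hw1]
      ring
    · intro n hn
      simp only [Finset.mem_singleton] at hn
      rw [if_neg (by omega), if_neg (by omega), if_neg (by omega)]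
      ring
  have hI2 : (∫ θ, F θ * E (-2) θ ∂mu) = 2*π*w2 := by
    rw [hIgen 2, tsum_eq_sum (s := {0, 2}) ?_]
    · rw [Finset.sum_insert (by decide), Finset.sum_singleton]
      rw [hc0]
      norm_num [hw2]
      ring
    · intro n hn
      simp only [Finset.mem_insert, Finset.mem_singleton] at hn
      push_neg at hn
      rw [if_neg (by omega), if_neg (by omega), if_neg (by omega)]
      ring
  have hI4 : (∫ θ, F θ * E (-4) θ ∂mu) = 2*π*w4 := by
    rw [hIgen 4, tsum_eq_sum (s := {1, 2, 4}) ?_]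
    · rw [Finset.sum_insert (by decide), Finset.sum_insert (by decide), Finset.sum_singleton]
      norm_num [hw4]
      ring
    · intro n hn
      simp only [Finset.mem_insert, Finset.mem_singleton] at hn
      push_neg at hn
      rw [if_neg (by omega), if_neg (by omega), if_neg (by omega)]
      ring
  -- Bessel
  set s : ℝ → ℂ := fun θ => w1 * E 1 θ + w2 * E 2 θ + w4 * E 4 θ with hsdef
  have hsc : Continuous s := by rw [hsdef]; fun_prop
  have hconj : ∀ θ, (starRingEnd ℂ) (s θ)
      = (starRingEnd ℂ) w1 * E (-1) θ + (starRingEnd ℂ) w2 * E (-2) θ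
        + (starRingEnd ℂ) w4 * E (-4) θ := by
    intro θ
    rw [hsdef]
    simp only [map_add, map_mul, conjE]
  have hFs : (∫ θ, F θ * (starRingEnd ℂ) (s θ) ∂mu)
      = ((2*π*(normSq w1 + normSq w2 + normSq w4) : ℝ) : ℂ) := by
    have : ∀ θ, F θ * (starRingEnd ℂ) (s θ)
        = (starRingEnd ℂ) w1 * (F θ * E (-1) θ) + (starRingEnd ℂ) w2 * (F θ * E (-2) θ)
          + (starRingEnd ℂ) w4 * (F θ * E (-4) θ) := by
      intro θ; rw [hconj]; ring
    simp only [this]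
    rw [MeasureTheory.integral_add, MeasureTheory.integral_add,
      MeasureTheory.integral_const_mul, MeasureTheory.integral_const_mul,
      MeasureTheory.integral_const_mul, hI1, hI2, hI4]
    · have hmc : ∀ x : ℂ, (starRingEnd ℂ) x * (2*↑π*x) = ((2*π : ℝ) : ℂ) * ((normSq x : ℝ) : ℂ) := by
        intro x
        rw [show (starRingEnd ℂ) x * (2*↑π*x) = (2:ℂ)*↑π*(x*(starRingEnd ℂ) x) by ring,
          Complex.mul_conj]
        push_cast; ring
      rw [hmc, hmc, hmc]
      push_cast; ring
    · exact intgE _ (by fun_prop)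
    · exact intgE _ (by fun_prop)
    · exact Integrable.add (intgE _ (by fun_prop)) (intgE _ (by fun_prop))
    · exact intgE _ (by fun_prop)
  have intgR : ∀ (f : ℝ → ℝ), Continuous f → Integrable f mu :=
    fun f hf => hf.integrableOn_Ioc
  have hqq : Continuous fun θ => q θ * (starRingEnd ℂ) (q θ) := hqc.mul (continuous_star.comp hqc)
  have hssc : Continuous fun θ => s θ * (starRingEnd ℂ) (s θ) := hsc.mul (continuous_star.comp hsc)
  have hFscont : Continuous fun θ => F θ * (starRingEnd ℂ) (s θ) :=
    hFc.mul (continuous_star.comp hsc)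
  have htrig : (∫ θ, s θ * (starRingEnd ℂ) (s θ) ∂mu)
      = ((2*π*(normSq w1 + normSq w2 + normSq w4) : ℝ) : ℂ) := by
    have := trig3 w1 w2 w4 1 2 4 (by decide) (by decide) (by decide)
    simp only [hsdef]
    rw [this]
    push_cast; ring
  have hss : (∫ θ, normSq (s θ) ∂mu) = 2*π*(normSq w1 + normSq w2 + normSq w4) := by
    have h1 : ∀ θ, normSq (s θ) = (s θ * (starRingEnd ℂ) (s θ)).re := by
      intro θ; rw [Complex.mul_conj]; simp
    simp only [h1]
    have h2 := integral_re (μ := mu) (f := fun θ => s θ * (starRingEnd ℂ) (s θ)) (intgE _ hssc)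
    simp only [RCLike.re_to_complex] at h2
    rw [h2, htrig, Complex.ofReal_re]
  have hFsre : (∫ θ, (F θ * (starRingEnd ℂ) (s θ)).re ∂mu)
      = 2*π*(normSq w1 + normSq w2 + normSq w4) := by
    have h2 := integral_re (μ := mu) (f := fun θ => F θ * (starRingEnd ℂ) (s θ)) (intgE _ hFscont)
    simp only [RCLike.re_to_complex] at h2
    rw [h2, hFs, Complex.ofReal_re]
  have hbessel : 2*π*(normSq w1 + normSq w2 + normSq w4) ≤ ∫ θ, normSq (F θ) ∂mu := by
    have h0 : (0:ℝ) ≤ ∫ θ, normSq (F θ - s θ) ∂mu :=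
      integral_nonneg fun θ => normSq_nonneg _
    have hexp : ∀ θ, normSq (F θ - s θ)
        = normSq (F θ) + normSq (s θ) - 2 * (F θ * (starRingEnd ℂ) (s θ)).re :=
      fun θ => Complex.normSq_sub _ _
    rw [MeasureTheory.integral_congr_ae (Filter.Eventually.of_forall hexp)] at h0
    rw [MeasureTheory.integral_sub, MeasureTheory.integral_add] at h0
    · rw [hss, MeasureTheory.integral_const_mul, hFsre] at h0
      linarith
    · exact intgR _ (Complex.continuous_normSq.comp hFc)
    · exact intgR _ (Complex.continuous_normSq.comp hsc)
    · exact Integrable.add (intgR _ (Complex.continuous_normSq.comp hFc))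
        (intgR _ (Complex.continuous_normSq.comp hsc))
    · exact Integrable.const_mul (intgR _ (Complex.continuous_re.comp hFscont)) _
  have hFq : (∫ θ, normSq (F θ) ∂mu) ≤ ∫ θ, normSq (q θ) ∂mu := by
    apply integral_mono (intgR _ (Complex.continuous_normSq.comp hFc))
      (intgR _ (Complex.continuous_normSq.comp hqc))
    intro θ
    simp only [Function.comp, hFdef, normSq_mul]
    have hg1 : normSq (g θ) ≤ 1 := by
      rw [Complex.normSq_eq_norm_sq]
      have h := hgle θ
      nlinarith [norm_nonneg (g θ)]
    nlinarith [mul_le_mul_of_nonneg_right hg1 (normSq_nonneg (q θ))]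
  have hns : ∀ (x : ℂ) (m : ℕ), normSq (x * (r:ℂ)^m) = normSq x * r^(2*m) := by
    intro x m
    rw [normSq_mul, ← Complex.ofReal_pow, Complex.normSq_ofReal]
    ring
  have hqval : (∫ θ, normSq (q θ) ∂mu) = 2*π*(1 + normSq v₂ * r^4 + normSq v₃ * r^6) := by
    have hq2 : ∀ θ, q θ = 1 * E 0 θ + (v₂ * (r:ℂ)^2) * E 2 θ + (v₃ * (r:ℂ)^3) * E 3 θ := by
      intro θ
      rw [hqdef]
      simp only [hz, zpow]
      have e0 : E 0 θ = 1 := by unfold E; simp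
      norm_num
      rw [e0]
      ring
    have h1 : ∀ θ, normSq (q θ) = (q θ * (starRingEnd ℂ) (q θ)).re := by
      intro θ; rw [Complex.mul_conj]; simp
    simp only [h1]
    have h2 := integral_re (μ := mu) (f := fun θ => q θ * (starRingEnd ℂ) (q θ)) (intgE _ hqq)
    simp only [RCLike.re_to_complex] at h2
    rw [h2]
    have h3 : (∫ θ, q θ * (starRingEnd ℂ) (q θ) ∂mu)
        = ((2*π*(1 + normSq v₂ * r^4 + normSq v₃ * r^6) : ℝ) : ℂ) := by
      simp only [funext hq2]
      rw [trig3 _ _ _ 0 2 3 (by decide) (by decide) (by decide)]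
      rw [show normSq (v₂ * (r:ℂ)^2) = normSq v₂ * r^4 by rw [hns v₂ 2]; try norm_num,
        show normSq (v₃ * (r:ℂ)^3) = normSq v₃ * r^6 by rw [hns v₃ 3]; try norm_num,
        Complex.normSq_one]
      push_cast; ring
    rw [h3, Complex.ofReal_re]
  -- combine
  have hfinal : 2*π*(normSq w1 + normSq w2 + normSq w4)
      ≤ 2*π*(1 + normSq v₂ * r^4 + normSq v₃ * r^6) := by
    calc 2*π*(normSq w1 + normSq w2 + normSq w4) ≤ ∫ θ, normSq (F θ) ∂mu := hbessel
      _ ≤ ∫ θ, normSq (q θ) ∂mu := hFq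
      _ = _ := hqval
  have hsum4 : normSq w1 + normSq w2 + normSq w4
      ≤ 1 + normSq v₂ * r^4 + normSq v₃ * r^6 :=
    le_of_mul_le_mul_left (by linarith [hfinal]) (by positivity : (0:ℝ) < 2*π)
  have e1 : normSq w1 = normSq (c 1) * r^2 := by
    rw [hw1, show ((r:ℂ)) = ((r:ℂ))^1 by ring, hns]
    try norm_num
  have e2 : normSq w2 = normSq (c 2) * r^4 := by rw [hw2, hns]; try norm_num
  have e4 : normSq w4 = normSq (c 4 + v₂ * c 2 + v₃ * c 1) * r^8 := by rw [hw4, hns]; try norm_num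
  rw [e1, e2, e4] at hsum4
  exact hsum4

theorem schwarz_coeff_bound_3 (ω : ℂ → ℂ) (c : ℕ → ℂ)
    (hc0 : c 0 = 0)
    (hsum : ∀ z ∈ ball (0 : ℂ) 1, HasSum (fun n => c n * z ^ n) (ω z))
    (hω : ∀ z ∈ ball (0 : ℂ) 1, ‖ω z‖ < 1) :
    ‖c 4‖ ≤ 1 - ‖c 1‖ ^ 2 - ‖c 2‖ ^ 2 := by
  have key : ∀ v₂ v₃ : ℂ, normSq (c 1) + normSq (c 2) + normSq (c 4 + v₂ * c 2 + v₃ * c 1)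
      ≤ 1 + normSq v₂ + normSq v₃ := by
    intro v₂ v₃
    set A := normSq (c 1) with hA
    set B := normSq (c 2) with hB
    set D := normSq (c 4 + v₂ * c 2 + v₃ * c 1) with hD
    have hle : ∀ᶠ r in nhdsWithin (1:ℝ) (Set.Iio 1),
        A * r^2 + B * r^4 + D * r^8 ≤ 1 + normSq v₂ * r^4 + normSq v₃ * r^6 := by
      filter_upwards [Ioo_mem_nhdsLT_of_mem (Set.mem_Ioc.2 ⟨zero_lt_one, le_refl 1⟩)] with r hr
      exact bessel ω c hc0 hsum hω v₂ v₃ r hr.1 hr.2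
    have h1 : Filter.Tendsto (fun r : ℝ => A * r^2 + B * r^4 + D * r^8)
        (nhdsWithin (1:ℝ) (Set.Iio 1)) (nhds (A + B + D)) := by
      have hcont : Continuous (fun r : ℝ => A * r^2 + B * r^4 + D * r^8) := by fun_prop
      have h := hcont.tendsto 1
      simp only [one_pow, mul_one] at h
      exact h.mono_left nhdsWithin_le_nhds
    have h2 : Filter.Tendsto (fun r : ℝ => 1 + normSq v₂ * r^4 + normSq v₃ * r^6)
        (nhdsWithin (1:ℝ) (Set.Iio 1)) (nhds (1 + normSq v₂ + normSq v₃)) := by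
      have hcont : Continuous (fun r : ℝ => 1 + normSq v₂ * r^4 + normSq v₃ * r^6) := by fun_prop
      have h := hcont.tendsto 1
      simp only [one_pow, mul_one] at h
      exact h.mono_left nhdsWithin_le_nhds
    exact le_of_tendsto_of_tendsto h1 h2 hle
  -- final algebra
  set d := ‖c 4‖ with hd
  set P := normSq (c 1) + normSq (c 2) with hP
  have hP0 : 0 ≤ P := by rw [hP]; exact add_nonneg (normSq_nonneg _) (normSq_nonneg _)
  have hd0 : 0 ≤ d := norm_nonneg _
  have hbase : P + d^2 ≤ 1 := by
    have h := key 0 0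
    simp only [zero_mul, add_zero, mul_zero, normSq_zero] at h
    have h2 : normSq (c 4) = d^2 := by rw [hd, Complex.normSq_eq_norm_sq]
    rw [← h2]
    linarith [h]
  set S := 1 - P with hS
  have hgoal : ‖c 1‖ ^ 2 = normSq (c 1) := (Complex.normSq_eq_norm_sq _).symm
  have hgoal2 : ‖c 2‖ ^ 2 = normSq (c 2) := (Complex.normSq_eq_norm_sq _).symm
  rw [hgoal, hgoal2]
  show d ≤ 1 - normSq (c 1) - normSq (c 2)
  have hSgoal : 1 - normSq (c 1) - normSq (c 2) = S := by rw [hS, hP]; ring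
  rw [hSgoal]
  by_cases hdz : d = 0
  · rw [hdz]; nlinarith [hbase]
  · have hdpos : 0 < d := lt_of_le_of_ne hd0 (Ne.symm hdz)
    have hSpos : 0 < S := by nlinarith [hbase]
    set t : ℝ := d / S with ht
    have htS : t * S = d := div_mul_cancel₀ _ (ne_of_gt hSpos)
    have ht0 : 0 ≤ t := div_nonneg hd0 hSpos.le
    set μ : ℂ := c 4 / (d : ℂ) with hμ
    have hdc : (d:ℂ) ≠ 0 := by exact_mod_cast hdz
    have hμd : μ * d = c 4 := by
      rw [hμ]; field_simp
    have hμ1 : normSq μ = 1 := by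
      rw [hμ, normSq_div, Complex.normSq_ofReal, Complex.normSq_eq_norm_sq, ← hd]
      field_simp [hdz]
    have m1 : (c 2) * (starRingEnd ℂ) (c 2) = ((normSq (c 2) : ℝ) : ℂ) := Complex.mul_conj _
    have m2 : (c 1) * (starRingEnd ℂ) (c 1) = ((normSq (c 1) : ℝ) : ℂ) := Complex.mul_conj _
    have hval : c 4 + ((t:ℂ)*μ*(starRingEnd ℂ) (c 2)) * c 2 + ((t:ℂ)*μ*(starRingEnd ℂ) (c 1)) * c 1
        = μ * (((d + t*P : ℝ)) : ℂ) := by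
      have hPc : ((d + t*P : ℝ) : ℂ) = (d:ℂ) + (t:ℂ) * ((normSq (c 1) : ℝ) + (normSq (c 2) : ℝ) : ℂ) := by
        rw [hP]; push_cast; ring
      rw [hPc]
      linear_combination ((t:ℂ)*μ) * m1 + ((t:ℂ)*μ) * m2 - hμd
    have hkey := key ((t:ℂ)*μ*(starRingEnd ℂ) (c 2)) ((t:ℂ)*μ*(starRingEnd ℂ) (c 1))
    rw [hval] at hkey
    rw [normSq_mul, hμ1, Complex.normSq_ofReal, one_mul] at hkey
    rw [normSq_mul, normSq_mul, normSq_conj, normSq_mul, normSq_mul, normSq_conj,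
      Complex.normSq_ofReal, hμ1] at hkey
    have hkey2 : P + (d + t*P)^2 ≤ 1 + t^2 * P := by
      rw [← sq] at hkey
      have e : t*t*1*normSq (c 2) + t*t*1*normSq (c 1) = t^2*P := by rw [hP]; ring
      linarith [hkey, e]
    have hd' : d = t * S := htS.symm
    have hP' : P = 1 - S := by rw [hS]; ring
    rw [hP'] at hkey2
    rw [hd'] at hkey2 ⊢
    have hts : t^2 * S ≤ S := by nlinarith [hkey2]
    have ht1 : t ≤ 1 := by nlinarith [hts, hSpos, ht0]
    nlinarith [mul_le_mul_of_nonneg_right ht1 hSpos.le]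
end

section
/- Let f be analytic and univalent on the unit disk with f(z) = z + a₂z² + a₃z³ + ⋯ and Re f'(z) > 0 on the disk. Then |a₃(a₂a₄ − a₃²) − a₄(a₄ − a₂a₃) + a₅(a₃ − a₂²)| ≤ 207/540. -/
open Complex Metric MeasureTheory intervalIntegral


private lemma hb_integral_exp (n : ℤ) :
    (∫ θ in (0:ℝ)..(2*Real.pi), Complex.exp (n * θ * Complex.I)) =
      if n = 0 then ((2*Real.pi : ℝ) : ℂ) else 0 := by
  rcases eq_or_ne n 0 with h | h
  · subst h
    simp
  · have hc : (n : ℂ) * Complex.I ≠ 0 := by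
      simp [Complex.I_ne_zero, h]
    have hrw : ∀ θ : ℝ, (n:ℂ) * θ * Complex.I = ((n:ℂ) * Complex.I) * θ := by
      intro θ; ring
    simp only [hrw]
    rw [integral_exp_mul_complex hc, if_neg h]
    have h1 : ((n:ℂ) * Complex.I) * ((2:ℝ)*Real.pi : ℝ) = (n : ℂ) * (2 * (Real.pi:ℂ) * Complex.I) := by
      push_cast; ring
    rw [h1, Complex.exp_int_mul_two_pi_mul_I]
    simp

set_option maxHeartbeats 800000 in
private lemma hb_summable {a : ℕ → ℂ} {f : ℂ → ℂ}
    (hfsum : ∀ z ∈ ball (0 : ℂ) 1, HasSum (fun n => a n * z ^ n) (f z))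
    {s : ℝ} (hs0 : 0 ≤ s) (hs1 : s < 1) :
    Summable (fun n => ‖a n‖ * s ^ n) := by
  obtain ⟨u, hu0, hus, hu1⟩ : ∃ u : ℝ, 0 < u ∧ s < u ∧ u < 1 :=
    ⟨(1+s)/2, by linarith, by linarith, by linarith⟩
  have hmem : ((u:ℝ) : ℂ) ∈ ball (0:ℂ) 1 := by
    simp only [mem_ball, dist_zero_right, Complex.norm_real, Real.norm_eq_abs]
    rwa [abs_of_pos hu0]
  have hsumm := (hfsum _ hmem).summable
  have htend := hsumm.tendsto_atTop_zero
  have h2 : Filter.Tendsto (fun n => ‖a n‖ * u ^ n) Filter.atTop (nhds 0) := by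
    have h3 := htend.norm
    simp only [norm_mul, norm_pow, Complex.norm_real, Real.norm_eq_abs, norm_zero,
      abs_of_pos hu0] at h3
    exact h3
  obtain ⟨C, hC'⟩ := h2.bddAbove_range
  have hC : ∀ n, ‖a n‖ * u ^ n ≤ C := fun n => hC' (Set.mem_range_self n)
  refine Summable.of_nonneg_of_le (f := fun n => C * (s/u)^n)
    (fun n => mul_nonneg (by positivity) (pow_nonneg hs0 n)) (fun n => ?_) ?_
  · 
    have h3 : ‖a n‖ * s ^ n = (‖a n‖ * u ^ n) * (s/u)^n := by
      rw [div_pow, mul_assoc, mul_comm ((u:ℝ)^n), div_mul_cancel₀ _ (by positivity : (u:ℝ)^n ≠ 0)]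
    rw [h3]
    exact mul_le_mul_of_nonneg_right (hC n) (by positivity)
  · apply Summable.mul_left
    apply summable_geometric_of_lt_one (by positivity)
    rw [div_lt_one hu0]; exact hus

private lemma hb_cont_f' {f f' : ℂ → ℂ}
    (hderiv : ∀ z ∈ ball (0 : ℂ) 1, HasDerivAt f (f' z) z) :
    ContinuousOn f' (ball (0:ℂ) 1) := by
  have hdiff : DifferentiableOn ℂ f (ball 0 1) := fun z hz =>
    ((hderiv z hz).differentiableAt).differentiableWithinAt
  have han : AnalyticOnNhd ℂ f (ball 0 1) := hdiff.analyticOnNhd isOpen_ball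
  have han' : AnalyticOnNhd ℂ (deriv f) (ball 0 1) := han.deriv
  exact han'.continuousOn.congr (fun z hz => ((hderiv z hz).deriv).symm)

set_option maxHeartbeats 1000000 in
private lemma hb_integral_f {a : ℕ → ℂ} {f : ℂ → ℂ}
    (hfsum : ∀ z ∈ ball (0 : ℂ) 1, HasSum (fun n => a n * z ^ n) (f z))
    {r : ℝ} (hr0 : 0 < r) (hr1 : r < 1) (m : ℤ) :
    (∫ θ in (0:ℝ)..(2*Real.pi),
        f ((r:ℂ) * Complex.exp (θ * Complex.I)) * Complex.exp (-(m:ℂ) * θ * Complex.I))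
      = if 0 ≤ m then ((2*Real.pi : ℝ):ℂ) * a m.toNat * (r:ℂ) ^ m.toNat else 0 := by
  have hpi : (0:ℝ) ≤ 2*Real.pi := by positivity
  have hmem : ∀ θ:ℝ, (r:ℂ) * Complex.exp (θ * Complex.I) ∈ ball (0:ℂ) 1 := by
    intro θ
    simp only [mem_ball, dist_zero_right, norm_mul, Complex.norm_real, Real.norm_eq_abs,
      Complex.norm_exp_ofReal_mul_I, mul_one, abs_of_pos hr0]
    exact hr1
  set g : ℕ → ℝ → ℂ := fun k θ =>
    a k * ((r:ℂ) * Complex.exp (θ * Complex.I))^k * Complex.exp (-(m:ℂ) * θ * Complex.I) with hg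
  have hcont : ∀ k, Continuous (g k) := by
    intro k
    have hexp : Continuous fun θ:ℝ => Complex.exp (θ * Complex.I) :=
      Complex.continuous_exp.comp (Complex.continuous_ofReal.mul continuous_const)
    have hexp2 : Continuous fun θ:ℝ => Complex.exp (-(m:ℂ) * θ * Complex.I) := by
      apply Complex.continuous_exp.comp
      exact (continuous_const.mul Complex.continuous_ofReal).mul continuous_const
    exact ((continuous_const.mul ((continuous_const.mul hexp).pow k)).mul hexp2)
  have hnorm : ∀ k θ, ‖g k θ‖ = ‖a k‖ * r^k := by
    intro k θ
    simp only [hg, norm_mul, norm_pow, Complex.norm_real, Real.norm_eq_abs,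
      Complex.norm_exp_ofReal_mul_I, mul_one, abs_of_pos hr0]
    have h2 : ‖Complex.exp (-(m:ℂ) * (θ:ℂ) * Complex.I)‖ = 1 := by
      have : -(m:ℂ) * (θ:ℂ) * Complex.I = ((-(m:ℝ) * θ : ℝ) : ℂ) * Complex.I := by push_cast; ring
      rw [this, Complex.norm_exp_ofReal_mul_I]
    rw [h2, mul_one]
  -- rewrite integrand as tsum
  have hpt : ∀ θ:ℝ, f ((r:ℂ) * Complex.exp (θ * Complex.I)) * Complex.exp (-(m:ℂ) * θ * Complex.I)
      = ∑' k, g k θ := by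
    intro θ
    exact ((hfsum _ (hmem θ)).mul_right _).tsum_eq.symm
  simp only [hpt]
  rw [intervalIntegral.integral_of_le hpi]
  rw [← MeasureTheory.integral_tsum_of_summable_integral_norm]
  · -- evaluate each integral and sum
    have heval : ∀ k : ℕ, (∫ θ in Set.Ioc (0:ℝ) (2*Real.pi), g k θ)
        = a k * (r:ℂ)^k * (if ((k:ℤ) - m) = 0 then ((2*Real.pi : ℝ):ℂ) else 0) := by
      intro k
      rw [← intervalIntegral.integral_of_le hpi]
      have hptk : ∀ θ:ℝ, g k θ = (a k * (r:ℂ)^k) * Complex.exp ((((k:ℤ) - m : ℤ):ℂ) * θ * Complex.I) := by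
        intro θ
        have hexp : Complex.exp ((k:ℂ) * ((θ:ℂ) * Complex.I)) * Complex.exp (-(m:ℂ) * θ * Complex.I)
            = Complex.exp ((((k:ℤ) - m : ℤ):ℂ) * θ * Complex.I) := by
          rw [← Complex.exp_add]; congr 1; push_cast; ring
        simp only [hg, mul_pow, ← Complex.exp_nat_mul]
        rw [← hexp]
        ring
      simp only [hptk]
      rw [intervalIntegral.integral_const_mul, hb_integral_exp ((k:ℤ) - m)]
    simp only [heval]
    rcases le_or_gt 0 m with hm | hm
    · rw [if_pos hm]
      have hcond : ∀ k : ℕ, ((k:ℤ) - m = 0) ↔ (k = m.toNat) := by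
        intro k
        constructor
        · intro h
          omega
        · intro h
          omega
      rw [tsum_eq_single m.toNat]
      · rw [if_pos (by omega : ((m.toNat:ℤ) - m = 0))]
        ring
      · intro k hk
        rw [if_neg (by omega : ¬ ((k:ℤ) - m = 0)), mul_zero]
    · rw [if_neg (by omega : ¬ (0 ≤ m))]
      have : ∀ k : ℕ, a k * (r:ℂ)^k * (if ((k:ℤ) - m) = 0 then ((2*Real.pi : ℝ):ℂ) else 0) = 0 := by
        intro k
        rw [if_neg (by omega : ¬ ((k:ℤ) - m = 0)), mul_zero]
      simp only [this, tsum_zero]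
  · intro k
    exact (hcont k).integrableOn_Ioc
  · apply Summable.of_nonneg_of_le (f := fun k => (2*Real.pi) * (‖a k‖ * r^k))
      (fun k => by positivity) (fun k => ?_) (Summable.mul_left _ (hb_summable hfsum (le_of_lt hr0) hr1))
    have : (∫ θ in Set.Ioc (0:ℝ) (2*Real.pi), ‖g k θ‖) = (2*Real.pi) * (‖a k‖ * r^k) := by
      simp only [hnorm]
      rw [MeasureTheory.setIntegral_const, Real.volume_real_Ioc_of_le hpi, sub_zero,
        smul_eq_mul]
    rw [this]

set_option maxHeartbeats 1000000 in
private lemma hb_integral_f'_aux {a : ℕ → ℂ} {f f' : ℂ → ℂ}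
    (hfsum : ∀ z ∈ ball (0 : ℂ) 1, HasSum (fun n => a n * z ^ n) (f z))
    (hderiv : ∀ z ∈ ball (0 : ℂ) 1, HasDerivAt f (f' z) z)
    {r : ℝ} (hr0 : 0 < r) (hr1 : r < 1) (d : ℤ) :
    (∫ θ in (0:ℝ)..(2*Real.pi),
        f' ((r:ℂ) * Complex.exp (θ * Complex.I)) * Complex.exp (-(d:ℂ) * θ * Complex.I))
      = if 0 ≤ d then
          ((2*Real.pi : ℝ):ℂ) * (((d.toNat+1:ℕ):ℂ) * a (d.toNat+1) * (r:ℂ) ^ d.toNat) else 0 := by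
  have hmem : ∀ θ:ℝ, (r:ℂ) * Complex.exp (θ * Complex.I) ∈ ball (0:ℂ) 1 := by
    intro θ
    simp only [mem_ball, dist_zero_right, norm_mul, Complex.norm_real, Real.norm_eq_abs,
      Complex.norm_exp_ofReal_mul_I, mul_one, abs_of_pos hr0]
    exact hr1
  have hcirc : Continuous fun θ:ℝ => (r:ℂ) * Complex.exp (θ * Complex.I) :=
    continuous_const.mul (Complex.continuous_exp.comp (Complex.continuous_ofReal.mul continuous_const))
  have hfc : Continuous fun θ:ℝ => f ((r:ℂ) * Complex.exp (θ * Complex.I)) := by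
    have hfcont : ContinuousOn f (ball (0:ℂ) 1) := fun z hz =>
      (hderiv z hz).continuousAt.continuousWithinAt
    exact hfcont.comp_continuous hcirc hmem
  have hf'c : Continuous fun θ:ℝ => f' ((r:ℂ) * Complex.exp (θ * Complex.I)) :=
    (hb_cont_f' hderiv).comp_continuous hcirc hmem
  have hexpc : ∀ w : ℂ, Continuous fun θ:ℝ => Complex.exp (w * θ * Complex.I) := by
    intro w
    apply Complex.continuous_exp.comp
    exact (continuous_const.mul Complex.continuous_ofReal).mul continuous_const
  -- the derivative identity
  set G : ℝ → ℂ := fun θ =>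
    f' ((r:ℂ) * Complex.exp (θ * Complex.I)) * ((r:ℂ) * Complex.exp (θ * Complex.I) * Complex.I)
        * Complex.exp (-((d:ℂ)+1) * θ * Complex.I)
      + f ((r:ℂ) * Complex.exp (θ * Complex.I))
        * ((-((d:ℂ)+1)) * Complex.I * Complex.exp (-((d:ℂ)+1) * θ * Complex.I)) with hG
  have hF : ∀ θ : ℝ, HasDerivAt
      (fun θ:ℝ => f ((r:ℂ) * Complex.exp (θ * Complex.I)) * Complex.exp (-((d:ℂ)+1) * θ * Complex.I))
      (G θ) θ := by
    intro θ
    have hc1 : HasDerivAt (fun z:ℂ => (r:ℂ) * Complex.exp (z * Complex.I))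
        ((r:ℂ) * Complex.exp ((θ:ℂ) * Complex.I) * Complex.I) (θ:ℂ) := by
      have h0 : HasDerivAt (fun z:ℂ => z * Complex.I) (Complex.I) (θ:ℂ) := by
        simpa using (hasDerivAt_id (θ:ℂ)).mul_const Complex.I
      have h1 := (Complex.hasDerivAt_exp ((θ:ℂ) * Complex.I)).comp (θ:ℂ) h0
      have h2 := h1.const_mul (r:ℂ)
      simpa [mul_assoc] using h2
    have h2 : HasDerivAt f (f' ((r:ℂ) * Complex.exp ((θ:ℂ) * Complex.I)))
        ((r:ℂ) * Complex.exp ((θ:ℂ) * Complex.I)) := hderiv _ (hmem θ)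
    have hcomp : HasDerivAt (fun z:ℂ => f ((r:ℂ) * Complex.exp (z * Complex.I)))
        (f' ((r:ℂ) * Complex.exp ((θ:ℂ) * Complex.I)) * ((r:ℂ) * Complex.exp ((θ:ℂ) * Complex.I) * Complex.I))
        (θ:ℂ) := h2.comp (θ:ℂ) hc1
    have h3 : HasDerivAt (fun z:ℂ => Complex.exp (-((d:ℂ)+1) * z * Complex.I))
        ((-((d:ℂ)+1)) * Complex.I * Complex.exp (-((d:ℂ)+1) * (θ:ℂ) * Complex.I)) (θ:ℂ) := by
      have h0 : HasDerivAt (fun z:ℂ => -((d:ℂ)+1) * z * Complex.I) ((-((d:ℂ)+1)) * Complex.I) (θ:ℂ) := by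
        have := ((hasDerivAt_id (θ:ℂ)).const_mul (-((d:ℂ)+1))).mul_const Complex.I
        simpa [mul_assoc] using this
      have h1 := (Complex.hasDerivAt_exp (-((d:ℂ)+1) * (θ:ℂ) * Complex.I)).comp (θ:ℂ) h0
      simpa [mul_comm, Function.comp_def] using h1
    have hmul := hcomp.mul h3
    have := hmul.comp_ofReal
    simpa [hG] using this
  have hGint : IntervalIntegrable G volume 0 (2*Real.pi) := by
    apply Continuous.intervalIntegrable
    rw [hG]
    have e1 := hexpc (-((d:ℂ)+1))
    exact ((hf'c.mul (hcirc.mul continuous_const)).mul e1).add (hfc.mul (continuous_const.mul e1))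
  have hFTC := intervalIntegral.integral_eq_sub_of_hasDerivAt (fun θ _ => hF θ) hGint
  have e1 : Complex.exp (((2*Real.pi : ℝ):ℂ) * Complex.I) = 1 := by
    rw [show (((2*Real.pi:ℝ):ℂ)) = 2*(Real.pi:ℂ) by push_cast; ring, Complex.exp_two_pi_mul_I]
  have e2 : Complex.exp (-((d:ℂ)+1) * ((2*Real.pi : ℝ):ℂ) * Complex.I) = 1 := by
    rw [show -((d:ℂ)+1) * ((2*Real.pi:ℝ):ℂ) * Complex.I
        = ((-(d+1):ℤ):ℂ) * (2*(Real.pi:ℂ)*Complex.I) by push_cast; ring,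
      Complex.exp_int_mul_two_pi_mul_I]
  have hper : f ((r:ℂ) * Complex.exp (((2*Real.pi : ℝ):ℂ) * Complex.I))
        * Complex.exp (-((d:ℂ)+1) * ((2*Real.pi : ℝ):ℂ) * Complex.I)
      - f ((r:ℂ) * Complex.exp (((0:ℝ):ℂ) * Complex.I))
        * Complex.exp (-((d:ℂ)+1) * ((0:ℝ):ℂ) * Complex.I) = 0 := by
    rw [e1, e2]
    norm_num
  rw [hper] at hFTC
  -- split the integral
  have hint1 : IntervalIntegrable (fun θ:ℝ =>
      f' ((r:ℂ) * Complex.exp (θ * Complex.I)) * ((r:ℂ) * Complex.exp (θ * Complex.I) * Complex.I)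
        * Complex.exp (-((d:ℂ)+1) * θ * Complex.I)) volume 0 (2*Real.pi) := by
    apply Continuous.intervalIntegrable
    have e1 := hexpc (-((d:ℂ)+1))
    exact (hf'c.mul (hcirc.mul continuous_const)).mul e1
  have hint2 : IntervalIntegrable (fun θ:ℝ =>
      f ((r:ℂ) * Complex.exp (θ * Complex.I))
        * ((-((d:ℂ)+1)) * Complex.I * Complex.exp (-((d:ℂ)+1) * θ * Complex.I))) volume 0 (2*Real.pi) := by
    apply Continuous.intervalIntegrable
    have e1 := hexpc (-((d:ℂ)+1))
    exact hfc.mul (continuous_const.mul e1)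
  rw [hG] at hFTC
  rw [intervalIntegral.integral_add hint1 hint2] at hFTC
  -- rewrite first integral
  have hrw1 : ∀ θ:ℝ, f' ((r:ℂ) * Complex.exp (θ * Complex.I)) * ((r:ℂ) * Complex.exp (θ * Complex.I) * Complex.I)
        * Complex.exp (-((d:ℂ)+1) * θ * Complex.I)
      = ((r:ℂ) * Complex.I) * (f' ((r:ℂ) * Complex.exp (θ * Complex.I)) * Complex.exp (-(d:ℂ) * θ * Complex.I)) := by
    intro θ
    have hexp : Complex.exp ((θ:ℂ) * Complex.I) * Complex.exp (-((d:ℂ)+1) * θ * Complex.I)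
        = Complex.exp (-(d:ℂ) * θ * Complex.I) := by
      rw [← Complex.exp_add]
      congr 1
      ring
    rw [← hexp]
    ring
  have hrw2 : ∀ θ:ℝ, f ((r:ℂ) * Complex.exp (θ * Complex.I))
        * ((-((d:ℂ)+1)) * Complex.I * Complex.exp (-((d:ℂ)+1) * θ * Complex.I))
      = ((-((d:ℂ)+1)) * Complex.I) * (f ((r:ℂ) * Complex.exp (θ * Complex.I))
          * Complex.exp (-(((d+1:ℤ)):ℂ) * θ * Complex.I)) := by
    intro θ
    have : -(((d+1:ℤ)):ℂ) = -((d:ℂ)+1) := by push_cast; ring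
    rw [this]
    ring
  simp only [hrw1, hrw2] at hFTC
  rw [intervalIntegral.integral_const_mul, intervalIntegral.integral_const_mul,
    hb_integral_f hfsum hr0 hr1 (d+1)] at hFTC
  -- now solve
  have hrI : ((r:ℂ) * Complex.I) ≠ 0 := by
    simp [Complex.I_ne_zero, Complex.ofReal_ne_zero, ne_of_gt hr0]
  rcases le_or_gt 0 d with hd | hd
  · obtain ⟨n, rfl⟩ : ∃ n:ℕ, d = (n:ℤ) := ⟨d.toNat, (Int.toNat_of_nonneg hd).symm⟩
    rw [if_pos (by omega : (0:ℤ) ≤ (n:ℤ) + 1)] at hFTC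
    rw [if_pos hd]
    rw [(by omega : ((n:ℤ)+1).toNat = n + 1), pow_succ] at hFTC
    rw [(by simp : ((n:ℤ)).toNat = n)]
    apply mul_left_cancel₀ hrI
    push_cast at hFTC ⊢
    linear_combination hFTC
  · rw [if_neg (by omega : ¬ (0:ℤ) ≤ d)]
    rcases eq_or_lt_of_le (by omega : d + 1 ≤ 0) with hd1 | hd1
    · -- d + 1 = 0
      have hc0 : ((d:ℂ) + 1) = 0 := by
        have h6 : ((d:ℝ) + 1) = 0 := by exact_mod_cast congrArg (Int.cast : ℤ → ℝ) hd1
        exact_mod_cast congrArg (Complex.ofReal) h6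
      rw [hc0] at hFTC
      simp only [neg_zero, zero_mul, mul_zero] at hFTC
      have h7 : ((r:ℂ) * Complex.I) * (∫ θ in (0:ℝ)..(2*Real.pi),
          f' ((r:ℂ) * Complex.exp (θ * Complex.I)) * Complex.exp (-(d:ℂ) * θ * Complex.I)) = 0 := by
        linear_combination hFTC
      exact (mul_eq_zero.mp h7).resolve_left hrI
    · rw [if_neg (by omega : ¬ (0:ℤ) ≤ d + 1)] at hFTC
      rw [mul_zero, add_zero] at hFTC
      have h7 : ((r:ℂ) * Complex.I) * (∫ θ in (0:ℝ)..(2*Real.pi),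
          f' ((r:ℂ) * Complex.exp (θ * Complex.I)) * Complex.exp (-(d:ℂ) * θ * Complex.I)) = 0 := by
        linear_combination hFTC
      exact (mul_eq_zero.mp h7).resolve_left hrI

noncomputable def hbX (a : ℕ → ℂ) (r : ℝ) : ℤ → ℂ := fun d =>
  if 0 ≤ d then ((d.toNat+1:ℕ):ℂ) * a (d.toNat+1) * (r:ℂ)^d.toNat else 0

set_option maxHeartbeats 2000000 in
private lemma hb_master {a : ℕ → ℂ} {f f' : ℂ → ℂ}
    (hfsum : ∀ z ∈ ball (0 : ℂ) 1, HasSum (fun n => a n * z ^ n) (f z))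
    (hderiv : ∀ z ∈ ball (0 : ℂ) 1, HasDerivAt f (f' z) z)
    (hre : ∀ z ∈ ball (0 : ℂ) 1, 0 < (f' z).re)
    {r : ℝ} (hr0 : 0 < r) (hr1 : r < 1) (t : Fin 5 → ℂ) :
    0 ≤ (∑ j : Fin 5, ∑ k : Fin 5,
        t j * (starRingEnd ℂ) (t k) * hbX a r ((j:ℤ) - (k:ℤ))).re := by
  have hpi : (0:ℝ) ≤ 2*Real.pi := by positivity
  have hmem : ∀ θ:ℝ, (r:ℂ) * Complex.exp (θ * Complex.I) ∈ ball (0:ℂ) 1 := by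
    intro θ
    simp only [mem_ball, dist_zero_right, norm_mul, Complex.norm_real, Real.norm_eq_abs,
      Complex.norm_exp_ofReal_mul_I, mul_one, abs_of_pos hr0]
    exact hr1
  have hP : ∀ d : ℤ, (∫ θ in (0:ℝ)..(2*Real.pi),
        f' ((r:ℂ) * Complex.exp (θ * Complex.I)) * Complex.exp (-(d:ℂ) * θ * Complex.I))
      = ((2*Real.pi : ℝ):ℂ) * hbX a r d := by
    intro d
    rw [hb_integral_f'_aux hfsum hderiv hr0 hr1 d, hbX]
    rcases le_or_gt 0 d with hd | hd
    · rw [if_pos hd, if_pos hd]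
    · rw [if_neg (not_le.mpr hd), if_neg (not_le.mpr hd), mul_zero]
  have hcirc : Continuous fun θ:ℝ => (r:ℂ) * Complex.exp (θ * Complex.I) :=
    continuous_const.mul (Complex.continuous_exp.comp (Complex.continuous_ofReal.mul continuous_const))
  have hf'c : Continuous fun θ:ℝ => f' ((r:ℂ) * Complex.exp (θ * Complex.I)) :=
    (hb_cont_f' hderiv).comp_continuous hcirc hmem
  have hexpc : ∀ w : ℂ, Continuous fun θ:ℝ => Complex.exp (w * θ * Complex.I) := by
    intro w
    apply Complex.continuous_exp.comp
    exact (continuous_const.mul Complex.continuous_ofReal).mul continuous_const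
  set T : ℝ → ℂ := fun θ => ∑ j : Fin 5, t j * Complex.exp (-((((j:ℤ)-2:ℤ)):ℂ) * θ * Complex.I) with hT
  have hTc : Continuous T := by
    apply continuous_finset_sum
    intro j _
    exact continuous_const.mul (hexpc _)
  have hTconj : ∀ θ:ℝ, (starRingEnd ℂ) (T θ)
      = ∑ k : Fin 5, (starRingEnd ℂ) (t k) * Complex.exp (((((k:ℤ)-2:ℤ)):ℂ) * θ * Complex.I) := by
    intro θ
    rw [hT]
    simp only [map_sum, map_mul]
    congr 1
    ext k
    congr 1
    rw [← Complex.exp_conj]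
    congr 1
    simp only [map_mul, map_neg, Complex.conj_I, Complex.conj_ofReal, map_intCast]
    ring
  have hTconjc : Continuous fun θ => (starRingEnd ℂ) (T θ) := Complex.continuous_conj.comp hTc
  -- nonnegativity of the weighted integral
  have hpos : 0 ≤ ∫ θ in (0:ℝ)..(2*Real.pi),
      (f' ((r:ℂ) * Complex.exp (θ * Complex.I))).re * Complex.normSq (T θ) := by
    apply intervalIntegral.integral_nonneg hpi
    intro θ _
    exact mul_nonneg (le_of_lt (hre _ (hmem θ))) (Complex.normSq_nonneg _)
  -- rewrite as real part of complex integral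
  have hFc : Continuous fun θ:ℝ => f' ((r:ℂ) * Complex.exp (θ * Complex.I)) * (T θ * (starRingEnd ℂ) (T θ)) :=
    hf'c.mul (hTc.mul hTconjc)
  have heq1 : (∫ θ in (0:ℝ)..(2*Real.pi),
      (f' ((r:ℂ) * Complex.exp (θ * Complex.I))).re * Complex.normSq (T θ))
      = (∫ θ in (0:ℝ)..(2*Real.pi),
          f' ((r:ℂ) * Complex.exp (θ * Complex.I)) * (T θ * (starRingEnd ℂ) (T θ))).re := by
    have hcomm := Complex.reCLM.intervalIntegral_comp_comm (hFc.intervalIntegrable (μ := MeasureTheory.volume) 0 (2*Real.pi))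
    simp only [Complex.reCLM_apply] at hcomm
    rw [← hcomm]
    apply intervalIntegral.integral_congr
    intro θ _
    simp only [Complex.reCLM_apply]
    rw [Complex.mul_conj]
    simp [Complex.mul_re]
  -- expand the complex integral
  have hpt : ∀ θ:ℝ, f' ((r:ℂ) * Complex.exp (θ * Complex.I)) * (T θ * (starRingEnd ℂ) (T θ))
      = ∑ j : Fin 5, ∑ k : Fin 5, (t j * (starRingEnd ℂ) (t k)) *
          (f' ((r:ℂ) * Complex.exp (θ * Complex.I)) *
            Complex.exp (-((((j:ℤ)-(k:ℤ)):ℤ):ℂ) * θ * Complex.I)) := by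
    intro θ
    rw [hTconj, hT]
    simp only
    rw [Finset.sum_mul_sum]
    rw [Finset.mul_sum]
    congr 1
    ext j
    rw [Finset.mul_sum]
    congr 1
    ext k
    have hexp : Complex.exp (-((((j:ℤ)-2:ℤ)):ℂ) * θ * Complex.I)
        * Complex.exp (((((k:ℤ)-2:ℤ)):ℂ) * θ * Complex.I)
        = Complex.exp (-((((j:ℤ)-(k:ℤ)):ℤ):ℂ) * θ * Complex.I) := by
      rw [← Complex.exp_add]
      congr 1
      push_cast
      ring
    rw [← hexp]
    ring
  have heq2 : (∫ θ in (0:ℝ)..(2*Real.pi),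
        f' ((r:ℂ) * Complex.exp (θ * Complex.I)) * (T θ * (starRingEnd ℂ) (T θ)))
      = ∑ j : Fin 5, ∑ k : Fin 5, (t j * (starRingEnd ℂ) (t k)) *
          (((2*Real.pi : ℝ):ℂ) * hbX a r ((j:ℤ) - (k:ℤ))) := by
    simp only [hpt]
    rw [intervalIntegral.integral_finset_sum]
    · apply Finset.sum_congr rfl
      intro j _
      rw [intervalIntegral.integral_finset_sum]
      · apply Finset.sum_congr rfl
        intro k _
        rw [intervalIntegral.integral_const_mul, hP ((j:ℤ) - (k:ℤ))]
      · intro k _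
        apply Continuous.intervalIntegrable
        exact continuous_const.mul (hf'c.mul (hexpc _))
    · intro j _
      apply Continuous.intervalIntegrable
      apply continuous_finset_sum
      intro k _
      exact continuous_const.mul (hf'c.mul (hexpc _))
  rw [heq1, heq2] at hpos
  have hfactor : ∑ j : Fin 5, ∑ k : Fin 5, (t j * (starRingEnd ℂ) (t k)) *
          (((2*Real.pi : ℝ):ℂ) * hbX a r ((j:ℤ) - (k:ℤ)))
      = ((2*Real.pi : ℝ):ℂ) * ∑ j : Fin 5, ∑ k : Fin 5,
          t j * (starRingEnd ℂ) (t k) * hbX a r ((j:ℤ) - (k:ℤ)) := by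
    rw [Finset.mul_sum]
    apply Finset.sum_congr rfl
    intro j _
    rw [Finset.mul_sum]
    apply Finset.sum_congr rfl
    intro k _
    ring
  rw [hfactor] at hpos
  rw [Complex.re_ofReal_mul] at hpos
  have hpi' : (0:ℝ) < 2*Real.pi := by positivity
  nlinarith [hpos]

private lemma hb_abs_le_re {w : ℂ} {B : ℝ}
    (h : ∀ σ : ℂ, σ * (starRingEnd ℂ) σ = 1 → (σ * w).re ≤ B) : ‖w‖ ≤ B := by
  rcases eq_or_ne w 0 with hw | hw
  · simpa [hw] using h 1 (by simp)
  · have hA : (0:ℝ) < ‖w‖ := by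
      simpa [norm_pos_iff] using hw
    set σ : ℂ := (starRingEnd ℂ) w / ((‖w‖ : ℝ) : ℂ) with hσdef
    have hσ : σ * (starRingEnd ℂ) σ = 1 := by
      rw [hσdef, map_div₀, Complex.conj_conj, Complex.conj_ofReal, div_mul_div_comm,
        mul_comm ((starRingEnd ℂ) w) w, Complex.mul_conj, ← Complex.sq_norm, sq,
        Complex.ofReal_mul, div_self]
      simp only [ne_eq, mul_eq_zero, Complex.ofReal_eq_zero, or_self]
      positivity
    have h2 := h σ hσ
    have h3 : σ * w = ((‖w‖ : ℝ) : ℂ) := by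
      rw [hσdef, div_mul_eq_mul_div, mul_comm, Complex.mul_conj, ← Complex.sq_norm, sq,
        Complex.ofReal_mul, mul_div_assoc, div_self (by simpa using ne_of_gt hA), mul_one]
    rw [h3] at h2
    simpa using h2

section
variable {X : ℤ → ℂ} {z1 z2 z3 z4 : ℂ}
  (hP : ∀ t : Fin 5 → ℂ, 0 ≤ (∑ j : Fin 5, ∑ k : Fin 5,
      t j * (starRingEnd ℂ) (t k) * X ((j:ℤ) - (k:ℤ))).re)
  (hX0 : X 0 = 1) (hX1 : X 1 = 2*z1) (hX2 : X 2 = 2*z2) (hX3 : X 3 = 2*z3) (hX4 : X 4 = 2*z4)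
  (hXm1 : X (-1) = 0) (hXm2 : X (-2) = 0) (hXm3 : X (-3) = 0) (hXm4 : X (-4) = 0)

include hP hX0 hX1 hX2 hX3 hX4 hXm1 hXm2 hXm3 hXm4

private lemma hbG1 : ‖z1‖ ≤ 1 := by
  apply hb_abs_le_re
  intro σ hσ
  have h := hP ![0, 0, 1, -σ, 0]
  have hsum : (∑ j : Fin 5, ∑ k : Fin 5,
      (![0, 0, 1, -σ, 0] : Fin 5 → ℂ) j * (starRingEnd ℂ) ((![0, 0, 1, -σ, 0] : Fin 5 → ℂ) k)
        * X ((j:ℤ) - (k:ℤ)))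
      = 1 + 1 - (σ*z1 + σ*z1) := by
    simp only [Fin.sum_univ_five, show (((0:Fin 5):ℕ):ℤ) = 0 from rfl,
      show (((1:Fin 5):ℕ):ℤ) = 1 from rfl, show (((2:Fin 5):ℕ):ℤ) = 2 from rfl,
      show (((3:Fin 5):ℕ):ℤ) = 3 from rfl, show (((4:Fin 5):ℕ):ℤ) = 4 from rfl,
      Matrix.cons_val_zero, Matrix.cons_val_one, Matrix.head_cons, Matrix.cons_val_two,
      Matrix.tail_cons, Matrix.cons_val_three, Matrix.cons_val_four, map_neg, map_one, map_zero]
    norm_num [hX0, hX1, hX2, hX3, hX4, hXm1, hXm2, hXm3, hXm4]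
    linear_combination hσ
  rw [hsum] at h
  simp only [Complex.sub_re, Complex.add_re, Complex.one_re] at h
  linarith

private lemma hbG2 : ‖z2‖ ≤ 1 := by
  apply hb_abs_le_re
  intro σ hσ
  have h := hP ![0, 0, 1, 0, -σ]
  have hsum : (∑ j : Fin 5, ∑ k : Fin 5,
      (![0, 0, 1, 0, -σ] : Fin 5 → ℂ) j * (starRingEnd ℂ) ((![0, 0, 1, 0, -σ] : Fin 5 → ℂ) k)
        * X ((j:ℤ) - (k:ℤ)))
      = 1 + 1 - (σ*z2 + σ*z2) := by
    simp only [Fin.sum_univ_five, show (((0:Fin 5):ℕ):ℤ) = 0 from rfl,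
      show (((1:Fin 5):ℕ):ℤ) = 1 from rfl, show (((2:Fin 5):ℕ):ℤ) = 2 from rfl,
      show (((3:Fin 5):ℕ):ℤ) = 3 from rfl, show (((4:Fin 5):ℕ):ℤ) = 4 from rfl,
      Matrix.cons_val_zero, Matrix.cons_val_one, Matrix.head_cons, Matrix.cons_val_two,
      Matrix.tail_cons, Matrix.cons_val_three, Matrix.cons_val_four, map_neg, map_one, map_zero]
    norm_num [hX0, hX1, hX2, hX3, hX4, hXm1, hXm2, hXm3, hXm4]
    linear_combination hσ
  rw [hsum] at h
  simp only [Complex.sub_re, Complex.add_re, Complex.one_re] at h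
  linarith

private lemma hbG3 : ‖z2 - z1^2‖ ≤ 1 - (‖z1‖)^2 := by
  apply hb_abs_le_re
  intro σ hσ
  have h := hP ![0, (starRingEnd ℂ) σ, z1 - (starRingEnd ℂ) σ * (starRingEnd ℂ) z1, -1, 0]
  have hsum : (∑ j : Fin 5, ∑ k : Fin 5,
      (![0, (starRingEnd ℂ) σ, z1 - (starRingEnd ℂ) σ * (starRingEnd ℂ) z1, -1, 0] : Fin 5 → ℂ) j
        * (starRingEnd ℂ) ((![0, (starRingEnd ℂ) σ, z1 - (starRingEnd ℂ) σ * (starRingEnd ℂ) z1, -1, 0] : Fin 5 → ℂ) k)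
        * X ((j:ℤ) - (k:ℤ)))
      = 1 + 1 - (z1 * (starRingEnd ℂ) z1 + z1 * (starRingEnd ℂ) z1)
        - (σ*(z2 - z1^2) + σ*(z2 - z1^2))
        + (σ*z1^2 - (starRingEnd ℂ) σ * ((starRingEnd ℂ) z1)^2) := by
    simp only [Fin.sum_univ_five, show (((0:Fin 5):ℕ):ℤ) = 0 from rfl,
      show (((1:Fin 5):ℕ):ℤ) = 1 from rfl, show (((2:Fin 5):ℕ):ℤ) = 2 from rfl,
      show (((3:Fin 5):ℕ):ℤ) = 3 from rfl, show (((4:Fin 5):ℕ):ℤ) = 4 from rfl,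
      Matrix.cons_val_zero, Matrix.cons_val_one, Matrix.head_cons, Matrix.cons_val_two,
      Matrix.tail_cons, Matrix.cons_val_three, Matrix.cons_val_four, map_neg, map_one, map_zero,
      map_sub, map_mul, Complex.conj_conj]
    norm_num [hX0, hX1, hX2, hX3, hX4, hXm1, hXm2, hXm3, hXm4]
    linear_combination (1 - z1 * (starRingEnd ℂ) z1) * hσ
  rw [hsum] at h
  rw [Complex.mul_conj] at h
  have hre : ((1:ℂ) + 1 - (((Complex.normSq z1 : ℝ):ℂ) + ((Complex.normSq z1 : ℝ):ℂ))
      - (σ*(z2 - z1^2) + σ*(z2 - z1^2))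
      + (σ*z1^2 - (starRingEnd ℂ) σ * ((starRingEnd ℂ) z1)^2)).re
      = 2 - 2*Complex.normSq z1 - 2*(σ*(z2 - z1^2)).re := by
    have hc : (starRingEnd ℂ) σ * ((starRingEnd ℂ) z1)^2 = (starRingEnd ℂ) (σ * z1^2) := by
      rw [map_mul, map_pow]
    rw [hc]
    simp only [Complex.add_re, Complex.sub_re, Complex.one_re, Complex.ofReal_re,
      Complex.conj_re]
    ring
  rw [hre] at h
  rw [Complex.sq_norm]
  linarith

private lemma hbG5 : ‖z4 - z2^2‖ ≤ 1 - (‖z2‖)^2 := by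
  apply hb_abs_le_re
  intro σ hσ
  have h := hP ![(starRingEnd ℂ) σ, 0, z2 - (starRingEnd ℂ) σ * (starRingEnd ℂ) z2, 0, -1]
  have hsum : (∑ j : Fin 5, ∑ k : Fin 5,
      (![(starRingEnd ℂ) σ, 0, z2 - (starRingEnd ℂ) σ * (starRingEnd ℂ) z2, 0, -1] : Fin 5 → ℂ) j
        * (starRingEnd ℂ) ((![(starRingEnd ℂ) σ, 0, z2 - (starRingEnd ℂ) σ * (starRingEnd ℂ) z2, 0, -1] : Fin 5 → ℂ) k)
        * X ((j:ℤ) - (k:ℤ)))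
      = 1 + 1 - (z2 * (starRingEnd ℂ) z2 + z2 * (starRingEnd ℂ) z2)
        - (σ*(z4 - z2^2) + σ*(z4 - z2^2))
        + (σ*z2^2 - (starRingEnd ℂ) σ * ((starRingEnd ℂ) z2)^2) := by
    simp only [Fin.sum_univ_five, show (((0:Fin 5):ℕ):ℤ) = 0 from rfl,
      show (((1:Fin 5):ℕ):ℤ) = 1 from rfl, show (((2:Fin 5):ℕ):ℤ) = 2 from rfl,
      show (((3:Fin 5):ℕ):ℤ) = 3 from rfl, show (((4:Fin 5):ℕ):ℤ) = 4 from rfl,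
      Matrix.cons_val_zero, Matrix.cons_val_one, Matrix.head_cons, Matrix.cons_val_two,
      Matrix.tail_cons, Matrix.cons_val_three, Matrix.cons_val_four, map_neg, map_one, map_zero,
      map_sub, map_mul, Complex.conj_conj]
    norm_num [hX0, hX1, hX2, hX3, hX4, hXm1, hXm2, hXm3, hXm4]
    linear_combination (1 - z2 * (starRingEnd ℂ) z2) * hσ
  rw [hsum] at h
  rw [Complex.mul_conj] at h
  have hre : ((1:ℂ) + 1 - (((Complex.normSq z2 : ℝ):ℂ) + ((Complex.normSq z2 : ℝ):ℂ))
      - (σ*(z4 - z2^2) + σ*(z4 - z2^2))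
      + (σ*z2^2 - (starRingEnd ℂ) σ * ((starRingEnd ℂ) z2)^2)).re
      = 2 - 2*Complex.normSq z2 - 2*(σ*(z4 - z2^2)).re := by
    have hc : (starRingEnd ℂ) σ * ((starRingEnd ℂ) z2)^2 = (starRingEnd ℂ) (σ * z2^2) := by
      rw [map_mul, map_pow]
    rw [hc]
    simp only [Complex.add_re, Complex.sub_re, Complex.one_re, Complex.ofReal_re,
      Complex.conj_re]
    ring
  rw [hre] at h
  rw [Complex.sq_norm]
  linarith

private lemma hbG4 : (‖z3 - z1*z2‖)^2
    ≤ (1 - (‖z1‖)^2) * (1 - (‖z2‖)^2) := by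
  set c : ℂ := z3 - z1*z2 with hc
  have key : ∀ β : ℝ, 0 ≤ β^2 * Complex.normSq c * (1 - Complex.normSq z1)
      + (1 - Complex.normSq z2) - 2*β*Complex.normSq c := by
    intro β
    have h := hP ![0, (β:ℂ)*c, z2 - (β:ℂ)*c*(starRingEnd ℂ) z1, 0, -1]
    have hsum : (∑ j : Fin 5, ∑ k : Fin 5,
        (![0, (β:ℂ)*c, z2 - (β:ℂ)*c*(starRingEnd ℂ) z1, 0, -1] : Fin 5 → ℂ) j
          * (starRingEnd ℂ) ((![0, (β:ℂ)*c, z2 - (β:ℂ)*c*(starRingEnd ℂ) z1, 0, -1] : Fin 5 → ℂ) k)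
          * X ((j:ℤ) - (k:ℤ)))
        = (β:ℂ)^2*(c * (starRingEnd ℂ) c)*(1 - z1*(starRingEnd ℂ) z1)
          + 1 - z2*(starRingEnd ℂ) z2 - 2*(β:ℂ)*(c*(starRingEnd ℂ) c)
          + (β:ℂ)*(((starRingEnd ℂ) c * z1 * z2) - (starRingEnd ℂ) ((starRingEnd ℂ) c * z1 * z2)) := by
      simp only [Fin.sum_univ_five, show (((0:Fin 5):ℕ):ℤ) = 0 from rfl,
        show (((1:Fin 5):ℕ):ℤ) = 1 from rfl, show (((2:Fin 5):ℕ):ℤ) = 2 from rfl,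
        show (((3:Fin 5):ℕ):ℤ) = 3 from rfl, show (((4:Fin 5):ℕ):ℤ) = 4 from rfl,
        Matrix.cons_val_zero, Matrix.cons_val_one, Matrix.head_cons, Matrix.cons_val_two,
        Matrix.tail_cons, Matrix.cons_val_three, Matrix.cons_val_four, map_neg, map_one, map_zero,
        map_sub, map_mul, Complex.conj_conj, Complex.conj_ofReal, hc]
      norm_num [hX0, hX1, hX2, hX3, hX4, hXm1, hXm2, hXm3, hXm4]
      ring
    rw [hsum] at h
    rw [Complex.mul_conj, Complex.mul_conj, Complex.mul_conj] at h
    have hre : (((β:ℝ):ℂ)^2*((Complex.normSq c : ℝ):ℂ)*(1 - ((Complex.normSq z1 : ℝ):ℂ))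
          + 1 - ((Complex.normSq z2:ℝ):ℂ) - 2*((β:ℝ):ℂ)*((Complex.normSq c:ℝ):ℂ)
          + ((β:ℝ):ℂ)*(((starRingEnd ℂ) c * z1 * z2) - (starRingEnd ℂ) ((starRingEnd ℂ) c * z1 * z2))).re
        = β^2 * Complex.normSq c * (1 - Complex.normSq z1)
          + (1 - Complex.normSq z2) - 2*β*Complex.normSq c := by
      set W : ℂ := (starRingEnd ℂ) c * z1 * z2 with hW
      have e1 : (((β:ℝ):ℂ)^2*((Complex.normSq c : ℝ):ℂ)*(1 - ((Complex.normSq z1 : ℝ):ℂ))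
          + 1 - ((Complex.normSq z2:ℝ):ℂ) - 2*((β:ℝ):ℂ)*((Complex.normSq c:ℝ):ℂ))
          = (((β^2 * Complex.normSq c * (1 - Complex.normSq z1)
          + 1 - Complex.normSq z2 - 2*β*Complex.normSq c : ℝ)):ℂ) := by
        push_cast
        ring
      rw [add_sub_assoc'] at *
      rw [show (((β:ℝ):ℂ)^2*((Complex.normSq c : ℝ):ℂ)*(1 - ((Complex.normSq z1 : ℝ):ℂ))
          + 1 - ((Complex.normSq z2:ℝ):ℂ) - 2*((β:ℝ):ℂ)*((Complex.normSq c:ℝ):ℂ)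
          + ((β:ℝ):ℂ)*(W - (starRingEnd ℂ) W))
          = (((β^2 * Complex.normSq c * (1 - Complex.normSq z1)
          + 1 - Complex.normSq z2 - 2*β*Complex.normSq c : ℝ)):ℂ) + ((β:ℝ):ℂ)*(W - (starRingEnd ℂ) W)
          from by rw [← e1]]
      simp only [Complex.add_re, Complex.ofReal_re, Complex.re_ofReal_mul, Complex.sub_re,
        Complex.conj_re]
      ring
    rw [hre] at h
    linarith
  -- now the discriminant argument
  have hnc : (0:ℝ) ≤ Complex.normSq c := Complex.normSq_nonneg c
  have hS : (0:ℝ) ≤ 1 - Complex.normSq z1 := by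
    have := hbG1 hP hX0 hX1 hX2 hX3 hX4 hXm1 hXm2 hXm3 hXm4
    rw [← Complex.sq_norm]
    nlinarith [norm_nonneg z1]
  have hT : (0:ℝ) ≤ 1 - Complex.normSq z2 := by
    have := hbG2 hP hX0 hX1 hX2 hX3 hX4 hXm1 hXm2 hXm3 hXm4
    rw [← Complex.sq_norm]
    nlinarith [norm_nonneg z2]
  rw [Complex.sq_norm, Complex.sq_norm, Complex.sq_norm]
  rcases eq_or_lt_of_le hS with hS0 | hSpos
  · -- 1 - normSq z1 = 0
    rcases eq_or_ne (Complex.normSq c) 0 with hc0 | hc0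
    · rw [hc0]; positivity
    · exfalso
      have hcpos : 0 < Complex.normSq c := lt_of_le_of_ne hnc (Ne.symm hc0)
      have hkey := key (((1 - Complex.normSq z2) + 1)/(2*Complex.normSq c))
      rw [← hS0] at hkey
      have he : 2*(((1 - Complex.normSq z2) + 1)/(2*Complex.normSq c))*Complex.normSq c
          = (1 - Complex.normSq z2) + 1 := by
        field_simp
      rw [he] at hkey
      simp only [mul_zero] at hkey
      linarith
  · have := key (1/(1 - Complex.normSq z1))
    have h1 : (1/(1 - Complex.normSq z1))^2 * Complex.normSq c * (1 - Complex.normSq z1)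
        = Complex.normSq c / (1 - Complex.normSq z1) := by
      field_simp
    rw [h1] at this
    have h2 : 2*(1/(1 - Complex.normSq z1))*Complex.normSq c
        = 2*Complex.normSq c / (1 - Complex.normSq z1) := by
      field_simp
    rw [h2] at this
    have h3 : Complex.normSq c / (1 - Complex.normSq z1) ≤ 1 - Complex.normSq z2 := by
      have h4 : Complex.normSq c / (1 - Complex.normSq z1)
          = Complex.normSq c / (1 - Complex.normSq z1) + (Complex.normSq c / (1 - Complex.normSq z1)
            - 2*Complex.normSq c / (1 - Complex.normSq z1)) + Complex.normSq c / (1 - Complex.normSq z1) := by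
        ring
      linarith [this]
    calc Complex.normSq c = (Complex.normSq c / (1 - Complex.normSq z1)) * (1 - Complex.normSq z1) := by
          field_simp
      _ ≤ (1 - Complex.normSq z2) * (1 - Complex.normSq z1) :=
          mul_le_mul_of_nonneg_right h3 (le_of_lt hSpos)
      _ = (1 - Complex.normSq z1) * (1 - Complex.normSq z2) := by ring

end


set_option maxHeartbeats 1000000 in
private theorem hbcaseA (p q : ℝ) (hp0 : 0 ≤ p) (hq0 : 0 ≤ q)
    (hA : q + 2*p^2 ≤ 1) :
    p^2*q^2/60 + 4*q^3/135 + p*q*((1-p^2)+(1-q^2))/12 + (1-p^2)*(1-q^2)/4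
      + (4*q+6*p^2)*(1-q^2)/15 ≤ 23/60 := by
  nlinarith [sq_nonneg (p-q), sq_nonneg (p*q), sq_nonneg (q-1/3), sq_nonneg (p-3/5), mul_nonneg hp0 hq0, sq_nonneg (p+q-9/10), mul_nonneg (mul_nonneg hp0 hp0) hq0, mul_nonneg (mul_nonneg hq0 hq0) hp0]

set_option maxHeartbeats 1000000 in
private theorem hbcaseB (p q : ℝ) (hp0 : 0 ≤ p) (hp1 : p ≤ 1) (hq0 : 0 ≤ q) (hq1 : q ≤ 1)
    (hB : 1 ≤ q + 2*p^2) :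
    p^2*q^2/60 + 4*q^3/135 + p*q*((1-p^2)+(1-q^2))/12 + (1-p^2)*(1-q^2)/4
      + (4-2*p^2)*(1-q^2)/15 ≤ 23/60 := by
  nlinarith [sq_nonneg (p-q), sq_nonneg (p*q), sq_nonneg (q-1/3), sq_nonneg (p-3/5), mul_nonneg hp0 hq0, sq_nonneg (p+q-9/10), mul_nonneg (mul_nonneg hp0 hp0) hq0, mul_nonneg (mul_nonneg hq0 hq0) hp0]

private theorem hbcombo (p q U E V : ℝ) (hp0 : 0 ≤ p) (hp1 : p ≤ 1) (hq0 : 0 ≤ q) (hq1 : q ≤ 1)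
    (hU0 : 0 ≤ U) (hU : U^2 ≤ (1-p^2)*(1-q^2))
    (hE0 : 0 ≤ E) (hE1 : E ≤ 1-p^2) (hE2 : E ≤ q+p^2)
    (hV0 : 0 ≤ V) (hV1 : V ≤ 1-q^2) :
    p^2*q^2/60 + 4*q^3/135 + p*q*U/6 + U^2/4 + (4*E/15 + 2*p^2/15)*V ≤ 23/60 := by
  have hs : (0:ℝ) ≤ 1-p^2 := by nlinarith
  have ht : (0:ℝ) ≤ 1-q^2 := by nlinarith
  have hUle : U ≤ ((1-p^2)+(1-q^2))/2 := by nlinarith [sq_nonneg ((1-p^2)-(1-q^2))]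
  have h1 : p*q*U/6 ≤ p*q*((1-p^2)+(1-q^2))/12 := by
    have := mul_nonneg hp0 hq0
    nlinarith
  have h2 : U^2/4 ≤ (1-p^2)*(1-q^2)/4 := by linarith
  have h3 : (4*E/15 + 2*p^2/15)*V ≤ (4*E/15 + 2*p^2/15)*(1-q^2) := by
    have : 0 ≤ 4*E/15 + 2*p^2/15 := by positivity
    exact mul_le_mul_of_nonneg_left hV1 this
  rcases le_total (q + 2*p^2) 1 with hc | hc
  · have h4 : (4*E/15 + 2*p^2/15)*(1-q^2) ≤ (4*q+6*p^2)*(1-q^2)/15 := by nlinarith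
    have := hbcaseA p q hp0 hq0 hc
    linarith
  · have h4 : (4*E/15 + 2*p^2/15)*(1-q^2) ≤ (4-2*p^2)*(1-q^2)/15 := by nlinarith
    have := hbcaseB p q hp0 hp1 hq0 hq1 hc
    linarith

set_option maxHeartbeats 1000000 in
theorem hankel_bound_R (f f' : ℂ → ℂ) (a : ℕ → ℂ)
    (ha0 : a 0 = 0) (ha1 : a 1 = 1)
    (hfsum : ∀ z ∈ ball (0 : ℂ) 1, HasSum (fun n => a n * z ^ n) (f z))
    (hinj : Set.InjOn f (ball (0 : ℂ) 1))
    (hderiv : ∀ z ∈ ball (0 : ℂ) 1, HasDerivAt f (f' z) z)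
    (hre : ∀ z ∈ ball (0 : ℂ) 1, 0 < (f' z).re) :
    ‖a 3 * (a 2 * a 4 - a 3 ^ 2) - a 4 * (a 4 - a 2 * a 3) + a 5 * (a 3 - a 2 ^ 2)‖
      ≤ 207 / 540 := by
  set Ha : ℂ := a 3 * (a 2 * a 4 - a 3 ^ 2) - a 4 * (a 4 - a 2 * a 3) + a 5 * (a 3 - a 2 ^ 2)
    with hHa
  have hmain : ∀ r : ℝ, 0 < r → r < 1 → r^6 * ‖Ha‖ ≤ 23/60 := by
    intro r hr0 hr1
    have hP : ∀ t : Fin 5 → ℂ, 0 ≤ (∑ j : Fin 5, ∑ k : Fin 5,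
        t j * (starRingEnd ℂ) (t k) * hbX a r ((j:ℤ) - (k:ℤ))).re :=
      fun t => hb_master hfsum hderiv hre hr0 hr1 t
    set z1 : ℂ := a 2 * (r:ℂ) with hz1
    set z2 : ℂ := (3/2:ℂ) * a 3 * (r:ℂ)^2 with hz2
    set z3 : ℂ := 2 * a 4 * (r:ℂ)^3 with hz3
    set z4 : ℂ := (5/2:ℂ) * a 5 * (r:ℂ)^4 with hz4
    have hX0 : hbX a r 0 = 1 := by norm_num [hbX, ha1]
    have hX1 : hbX a r 1 = 2*z1 := by norm_num [hbX, hz1]; ring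
    have hX2 : hbX a r 2 = 2*z2 := by norm_num [hbX, hz2, show (2:ℤ).toNat = 2 from rfl]; ring
    have hX3 : hbX a r 3 = 2*z3 := by norm_num [hbX, hz3, show (3:ℤ).toNat = 3 from rfl]; ring
    have hX4 : hbX a r 4 = 2*z4 := by norm_num [hbX, hz4, show (4:ℤ).toNat = 4 from rfl]; ring
    have hXm1 : hbX a r (-1) = 0 := by norm_num [hbX]
    have hXm2 : hbX a r (-2) = 0 := by norm_num [hbX]
    have hXm3 : hbX a r (-3) = 0 := by norm_num [hbX]
    have hXm4 : hbX a r (-4) = 0 := by norm_num [hbX]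
    have hp1 := hbG1 hP hX0 hX1 hX2 hX3 hX4 hXm1 hXm2 hXm3 hXm4
    have hq1 := hbG2 hP hX0 hX1 hX2 hX3 hX4 hXm1 hXm2 hXm3 hXm4
    have hE1 := hbG3 hP hX0 hX1 hX2 hX3 hX4 hXm1 hXm2 hXm3 hXm4
    have hV1 := hbG5 hP hX0 hX1 hX2 hX3 hX4 hXm1 hXm2 hXm3 hXm4
    have hU := hbG4 hP hX0 hX1 hX2 hX3 hX4 hXm1 hXm2 hXm3 hXm4
    set p : ℝ := ‖z1‖ with hp
    set q : ℝ := ‖z2‖ with hq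
    set U : ℝ := ‖z3 - z1*z2‖ with hUdef
    set E : ℝ := ‖z2 - z1^2‖ with hEdef
    set V : ℝ := ‖z4 - z2^2‖ with hVdef
    have hE2 : E ≤ q + p^2 := by
      have h1 := norm_sub_le z2 (z1^2)
      simp only [norm_pow] at h1
      exact h1
    have hcombo := hbcombo p q U E V (norm_nonneg _) hp1 (norm_nonneg _) hq1
      (norm_nonneg _) hU (norm_nonneg _) hE1 hE2 (norm_nonneg _) hV1
    -- the H3 identity and triangle inequality
    set Hmu : ℂ := (1/60:ℂ)*z1^2*z2^2 - (4/135:ℂ)*z2^3 + (1/6:ℂ)*z1*z2*(z3-z1*z2)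
        - (1/4:ℂ)*(z3-z1*z2)^2 + ((4/15:ℂ)*(z2-z1^2) - (2/15:ℂ)*z1^2)*(z4-z2^2) with hHmu
    have hident : Hmu = (r:ℂ)^6 * Ha := by
      rw [hHmu, hz1, hz2, hz3, hz4, hHa]
      ring
    have subtri : ∀ x y : ℂ, ‖x - y‖ ≤ ‖x‖ + ‖y‖ := by
      intro x y
      simpa using norm_sub_le x y
    have htri : ‖Hmu‖ ≤ p^2*q^2/60 + 4*q^3/135 + p*q*U/6 + U^2/4
        + (4*E/15 + 2*p^2/15)*V := by
      rw [hHmu]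
      have t1 : ‖(1/60:ℂ)*z1^2*z2^2‖ = p^2*q^2/60 := by
        simp [map_mul, map_pow, map_div₀, hp, hq]
        ring
      have t2 : ‖(4/135:ℂ)*z2^3‖ = 4*q^3/135 := by
        simp [map_mul, map_pow, map_div₀, hq]
        ring
      have t3 : ‖(1/6:ℂ)*z1*z2*(z3-z1*z2)‖ = p*q*U/6 := by
        simp [map_mul, map_div₀, hp, hq, hUdef]
        ring
      have t4 : ‖(1/4:ℂ)*(z3-z1*z2)^2‖ = U^2/4 := by
        simp [map_mul, map_pow, map_div₀, hUdef]
        ring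
      have t5 : ‖((4/15:ℂ)*(z2-z1^2) - (2/15:ℂ)*z1^2)*(z4-z2^2)‖
          ≤ (4*E/15 + 2*p^2/15)*V := by
        rw [norm_mul]
        apply mul_le_mul_of_nonneg_right _ (norm_nonneg _)
        calc ‖(4/15:ℂ)*(z2-z1^2) - (2/15:ℂ)*z1^2‖
            ≤ ‖(4/15:ℂ)*(z2-z1^2)‖ + ‖(2/15:ℂ)*z1^2‖ := subtri _ _
          _ = 4*E/15 + 2*p^2/15 := by
              simp [map_mul, map_pow, map_div₀, hEdef, hp]
              ring
      calc ‖(1/60:ℂ)*z1^2*z2^2 - (4/135:ℂ)*z2^3 + (1/6:ℂ)*z1*z2*(z3-z1*z2)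
            - (1/4:ℂ)*(z3-z1*z2)^2 + ((4/15:ℂ)*(z2-z1^2) - (2/15:ℂ)*z1^2)*(z4-z2^2)‖
          ≤ ‖(1/60:ℂ)*z1^2*z2^2 - (4/135:ℂ)*z2^3 + (1/6:ℂ)*z1*z2*(z3-z1*z2)
            - (1/4:ℂ)*(z3-z1*z2)^2‖ + ‖((4/15:ℂ)*(z2-z1^2) - (2/15:ℂ)*z1^2)*(z4-z2^2)‖ :=
            norm_add_le _ _
        _ ≤ ‖(1/60:ℂ)*z1^2*z2^2 - (4/135:ℂ)*z2^3 + (1/6:ℂ)*z1*z2*(z3-z1*z2)‖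
            + ‖(1/4:ℂ)*(z3-z1*z2)^2‖
            + ‖((4/15:ℂ)*(z2-z1^2) - (2/15:ℂ)*z1^2)*(z4-z2^2)‖ := by
            have := subtri ((1/60:ℂ)*z1^2*z2^2 - (4/135:ℂ)*z2^3 + (1/6:ℂ)*z1*z2*(z3-z1*z2))
              ((1/4:ℂ)*(z3-z1*z2)^2)
            linarith
        _ ≤ ‖(1/60:ℂ)*z1^2*z2^2 - (4/135:ℂ)*z2^3‖ + ‖(1/6:ℂ)*z1*z2*(z3-z1*z2)‖
            + ‖(1/4:ℂ)*(z3-z1*z2)^2‖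
            + ‖((4/15:ℂ)*(z2-z1^2) - (2/15:ℂ)*z1^2)*(z4-z2^2)‖ := by
            have := norm_add_le ((1/60:ℂ)*z1^2*z2^2 - (4/135:ℂ)*z2^3) ((1/6:ℂ)*z1*z2*(z3-z1*z2))
            linarith
        _ ≤ ‖(1/60:ℂ)*z1^2*z2^2‖ + ‖(4/135:ℂ)*z2^3‖
            + ‖(1/6:ℂ)*z1*z2*(z3-z1*z2)‖ + ‖(1/4:ℂ)*(z3-z1*z2)^2‖
            + ‖((4/15:ℂ)*(z2-z1^2) - (2/15:ℂ)*z1^2)*(z4-z2^2)‖ := by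
            have := subtri ((1/60:ℂ)*z1^2*z2^2) ((4/135:ℂ)*z2^3)
            linarith
        _ ≤ p^2*q^2/60 + 4*q^3/135 + p*q*U/6 + U^2/4 + (4*E/15 + 2*p^2/15)*V := by
            rw [t1, t2, t3, t4]
            linarith [t5]
    have habsr : ‖Hmu‖ = r^6 * ‖Ha‖ := by
      rw [hident, norm_mul, norm_pow, Complex.norm_real, Real.norm_eq_abs, abs_of_pos hr0]
    linarith [htri, hcombo, habsr.symm.le, habsr.le]
  -- limit r → 1
  have hX0 : (0:ℝ) ≤ ‖Ha‖ := norm_nonneg _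
  have htend : Filter.Tendsto (fun r:ℝ => r^6 * ‖Ha‖) (nhdsWithin 1 (Set.Iio 1))
      (nhds ((1:ℝ)^6 * ‖Ha‖)) := by
    apply Filter.Tendsto.mono_left _ nhdsWithin_le_nhds
    exact ((continuous_pow 6).mul continuous_const).tendsto 1
  have hev : ∀ᶠ r in nhdsWithin (1:ℝ) (Set.Iio 1), r^6 * ‖Ha‖ ≤ 23/60 := by
    filter_upwards [Ioo_mem_nhdsLT_of_mem (⟨by norm_num, le_refl 1⟩ : (1:ℝ) ∈ Set.Ioc 0 1)]
      with r hr
    exact hmain r hr.1 hr.2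
  have hfin : (1:ℝ)^6 * ‖Ha‖ ≤ 23/60 := le_of_tendsto htend hev
  rw [one_pow, one_mul] at hfin
  have : (207:ℝ)/540 = 23/60 := by norm_num
  rw [this]
  exact hfin
end

section
/- For all real x, y with 0 ≤ x, 0 ≤ y, and x + y ≤ 1, the function g₁(x,y) = −128y³ + (144 − 144x + 12x²)y − 72x² + 72x + 7 satisfies g₁(x,y) ≤ 7 + 24√6. -/
theorem g1_bound (x y : ℝ) (hx : 0 ≤ x) (hy : 0 ≤ y) (hxy : x + y ≤ 1) :
    -128 * y ^ 3 + (144 - 144 * x + 12 * x ^ 2) * y - 72 * x ^ 2 + 72 * x + 7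
      ≤ 7 + 24 * Real.sqrt 6 := by
  set s := Real.sqrt 6 with hs
  have hs2 : s ^ 2 = 6 := Real.sq_sqrt (by norm_num)
  have hspos : 0 < s := Real.sqrt_pos.mpr (by norm_num)
  have hkey : 0 ≤ 4 * (4*y - s)^2 * (2*y + s) := by positivity
  rcases le_or_gt y (1/2) with hc | hc
  · -- K : (72-12y) * C(y) ≥ (72y-36)^2
    have hK : 48 * (6 - y) * ((4*y - s)^2 * (2*y + s)) ≥ 1296 * (2*y - 1)^2 := by
      nlinarith [sq_nonneg (4*y - s), mul_nonneg hy (sq_nonneg (4*y - s)),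
        mul_nonneg (mul_nonneg hy hy) hy, sq_nonneg (2*y - 1), hspos.le, hs2,
        mul_nonneg hy (mul_nonneg hy hspos.le), sq_nonneg y,
        mul_nonneg (sq_nonneg (4*y-s)) hspos.le,
        mul_nonneg (mul_nonneg hy hy) hspos.le]
    nlinarith [sq_nonneg ((72 - 12*y)*x + (72*y - 36)), hK, hkey,
      mul_nonneg hx hy, hs2, hspos.le, sq_nonneg x]
  · nlinarith [hkey, mul_nonneg (mul_nonneg hx hx) (by linarith : (0:ℝ) ≤ 12 - 2*y),
      mul_nonneg hx (by linarith : (0:ℝ) ≤ 2*y - 1), hs2, hspos.le]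
end

section
/- The function g₁(x,y) = −128y³ + (144 − 144x + 12x²)y − 72x² + 72x + 7 has no critical points in the open square (0,1) × (0,1). -/
theorem g1_no_critical_points (x y : ℝ) (hx : x ∈ Set.Ioo (0 : ℝ) 1)
    (hy : y ∈ Set.Ioo (0 : ℝ) 1) :
    ¬ (-144 * y + 24 * x * y - 144 * x + 72 = 0 ∧
       -384 * y ^ 2 + 144 - 144 * x + 12 * x ^ 2 = 0) := by
  obtain ⟨hx0, hx1⟩ := hx
  obtain ⟨hy0, hy1⟩ := hy
  rintro ⟨h1, h2⟩
  have h6x : (0:ℝ) < 6 - x := by linarith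
  have hp : 0 < y * (6 - x) := mul_pos hy0 h6x
  have hp' : 0 < 6 * y - x * y := by linarith [mul_comm y (6 - x), (by ring : y * (6 - x) = 6 * y - x * y) ▸ hp]
  have hx2 : x < 1/2 := by linarith
  have heq : y * (6 - x) = 3 - 6*x := by nlinarith [hp']
  have h2' : 32 * y^2 = 12 - 12*x + x^2 := by linarith
  have key : (12 - 12*x + x^2) * (6 - x)^2 = 32 * (3 - 6*x)^2 := by
    calc (12 - 12*x + x^2) * (6 - x)^2 = 32 * y^2 * (6 - x)^2 := by rw [h2']
    _ = 32 * (y * (6 - x))^2 := by ring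
    _ = 32 * (3 - 6*x)^2 := by rw [heq]
  have hsq : x^2 < 1/4 := by nlinarith
  have hcube : (0:ℝ) < x^3 := by positivity
  have hcub : 0 < 1152 - 1536*x - 24*x^2 + x^3 := by linarith
  have hprod := mul_pos hx0 hcub
  nlinarith [sq_nonneg (1 - 2*x), hprod, key]
end

section
/- Let x, y ≥ 0 with x + y ≤ 1 and define h₂(x,y) = −12800y³ + 10524xy² + (1140x² − 20736x + 20736)y + 1217x³ − 2592x² + 13608x. Then ∂h₂/∂x ≥ 0 throughout the triangle {x ≥ 0, y ≥ 0, x + y ≤ 1}. -/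
theorem h2_partial_x_nonneg (x y : ℝ) (hx : 0 ≤ x) (hy : 0 ≤ y) (hxy : x + y ≤ 1) :
    0 ≤ deriv (fun t : ℝ => -12800 * y ^ 3 + 10524 * t * y ^ 2
        + (1140 * t ^ 2 - 20736 * t + 20736) * y + 1217 * t ^ 3 - 2592 * t ^ 2 + 13608 * t) x := by
  have h : HasDerivAt (fun t : ℝ => -12800 * y ^ 3 + 10524 * t * y ^ 2
      + (1140 * t ^ 2 - 20736 * t + 20736) * y + 1217 * t ^ 3 - 2592 * t ^ 2 + 13608 * t)
      (10524 * y ^ 2 + (2280 * x - 20736) * y + 3651 * x ^ 2 - 5184 * x + 13608) x := by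
    have := (((hasDerivAt_id x).const_mul (10524 * y ^ 2)).add
      (((((hasDerivAt_pow 2 x).const_mul (1140:ℝ)).sub ((hasDerivAt_id x).const_mul 20736)).add_const 20736).mul_const y)).add
      (((hasDerivAt_pow 3 x).const_mul (1217:ℝ)).sub ((hasDerivAt_pow 2 x).const_mul 2592)) |>.add ((hasDerivAt_id x).const_mul 13608) |>.const_add (-12800 * y ^ 3)
    convert this using 1
    · rfl
    · rfl
    · ext t; simp only [id, Pi.add_apply, Pi.sub_apply]; ring
    · push_cast; ring
  rw [h.deriv]
  nlinarith [sq_nonneg (1 - x - y), sq_nonneg (1 - y), sq_nonneg (1 - x), sq_nonneg x, sq_nonneg y, mul_nonneg hx hy, sq_nonneg (x - y), mul_nonneg (mul_nonneg hx hx) hy]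
end

section
/- If c₁, c₂, c₃, c₄ are complex numbers with |c₁| ≤ 1, |c₂| ≤ (1/2)(1 − |c₁|²), |c₃| ≤ 1, |c₄| ≤ 1 − |c₁|² − |c₂|², and |c₃ − 2c₁c₂ + c₁³| ≤ 1, then (1/540)|−54c₃(c₃ − 2c₁c₂ + c₁³) − 81c₃² − 12c₁⁴c₂ − 16c₂³ + 60c₁²c₂² − 7c₁⁶ + 72(2c₂ − c₁²)c₄| ≤ 207/540. -/
set_option maxHeartbeats 1000000

theorem key_estimate_case1 (c₁ c₂ c₃ c₄ : ℂ)
    (h1 : ‖c₁‖ ≤ 1)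
    (h2 : ‖c₂‖ ≤ (1 / 2) * (1 - ‖c₁‖ ^ 2))
    (h3 : ‖c₃‖ ≤ 1)
    (h4 : ‖c₄‖ ≤ 1 - ‖c₁‖ ^ 2 - ‖c₂‖ ^ 2)
    (h5 : ‖c₃ - 2 * c₁ * c₂ + c₁ ^ 3‖ ≤ 1) :
    (1 / 540) * ‖(-54 * c₃ * (c₃ - 2 * c₁ * c₂ + c₁ ^ 3) - 81 * c₃ ^ 2
      - 12 * c₁ ^ 4 * c₂ - 16 * c₂ ^ 3 + 60 * c₁ ^ 2 * c₂ ^ 2 - 7 * c₁ ^ 6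
      + 72 * (2 * c₂ - c₁ ^ 2) * c₄)‖ ≤ 207 / 540 := by
  set a := ‖c₁‖ with ha
  set b := ‖c₂‖ with hb
  set d := ‖c₃‖ with hd
  set f := ‖c₄‖ with hf
  set e := ‖c₃ - 2 * c₁ * c₂ + c₁ ^ 3‖ with he
  have ha0 : 0 ≤ a := norm_nonneg _
  have hb0 : 0 ≤ b := norm_nonneg _
  have hd0 : 0 ≤ d := norm_nonneg _
  have hf0 : 0 ≤ f := norm_nonneg _
  have he0 : 0 ≤ e := norm_nonneg _
  have key : ‖-54 * c₃ * (c₃ - 2 * c₁ * c₂ + c₁ ^ 3) - 81 * c₃ ^ 2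
      - 12 * c₁ ^ 4 * c₂ - 16 * c₂ ^ 3 + 60 * c₁ ^ 2 * c₂ ^ 2 - 7 * c₁ ^ 6
      + 72 * (2 * c₂ - c₁ ^ 2) * c₄‖
      ≤ 54*d*e + 81*d^2 + 12*a^4*b + 16*b^3 + 60*a^2*b^2 + 7*a^6 + 72*(2*b+a^2)*f := by
    have hdec : -54 * c₃ * (c₃ - 2 * c₁ * c₂ + c₁ ^ 3) - 81 * c₃ ^ 2
      - 12 * c₁ ^ 4 * c₂ - 16 * c₂ ^ 3 + 60 * c₁ ^ 2 * c₂ ^ 2 - 7 * c₁ ^ 6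
      + 72 * (2 * c₂ - c₁ ^ 2) * c₄
      = (-54 * c₃ * (c₃ - 2 * c₁ * c₂ + c₁ ^ 3)) + (-81 * c₃ ^ 2)
        + (-12 * c₁ ^ 4 * c₂) + (-16 * c₂ ^ 3) + (60 * c₁ ^ 2 * c₂ ^ 2)
        + (-7 * c₁ ^ 6) + (72 * (2 * c₂ - c₁ ^ 2) * c₄) := by ring
    rw [hdec]
    have t1 : ‖-54 * c₃ * (c₃ - 2 * c₁ * c₂ + c₁ ^ 3)‖ = 54 * d * e := by
      simp [norm_mul, he, hd]
    have t2 : ‖-81 * c₃ ^ 2‖ = 81 * d ^ 2 := by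
      simp [norm_mul, norm_pow, hd]
    have t3 : ‖-12 * c₁ ^ 4 * c₂‖ = 12 * a ^ 4 * b := by
      simp [norm_mul, norm_pow, ha, hb]
    have t4 : ‖-16 * c₂ ^ 3‖ = 16 * b ^ 3 := by
      simp [norm_mul, norm_pow, hb]
    have t5 : ‖60 * c₁ ^ 2 * c₂ ^ 2‖ = 60 * a ^ 2 * b ^ 2 := by
      simp [norm_mul, norm_pow, ha, hb]
    have t6 : ‖-7 * c₁ ^ 6‖ = 7 * a ^ 6 := by
      simp [norm_mul, norm_pow, ha]
    have t7 : ‖72 * (2 * c₂ - c₁ ^ 2) * c₄‖ ≤ 72 * (2*b + a^2) * f := by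
      rw [norm_mul, norm_mul]
      have : ‖2 * c₂ - c₁ ^ 2‖ ≤ 2*b + a^2 := by
        refine (norm_sub_le _ _).trans ?_
        simp [norm_mul, norm_pow, ha, hb]
      have h72 : ‖(72 : ℂ)‖ = 72 := by norm_num
      rw [h72]
      have := mul_le_mul_of_nonneg_right this hf0
      nlinarith [this]
    calc ‖_‖ ≤ ‖-54 * c₃ * (c₃ - 2 * c₁ * c₂ + c₁ ^ 3) + -81 * c₃ ^ 2
        + -12 * c₁ ^ 4 * c₂ + -16 * c₂ ^ 3 + 60 * c₁ ^ 2 * c₂ ^ 2 + -7 * c₁ ^ 6‖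
        + ‖72 * (2 * c₂ - c₁ ^ 2) * c₄‖ := norm_add_le _ _
      _ ≤ ‖-54 * c₃ * (c₃ - 2 * c₁ * c₂ + c₁ ^ 3)‖ + ‖-81 * c₃ ^ 2‖
        + ‖-12 * c₁ ^ 4 * c₂‖ + ‖-16 * c₂ ^ 3‖
        + ‖60 * c₁ ^ 2 * c₂ ^ 2‖ + ‖-7 * c₁ ^ 6‖
        + ‖72 * (2 * c₂ - c₁ ^ 2) * c₄‖ := by
          gcongr
          refine (norm_add_le _ _).trans ?_
          gcongr
          refine (norm_add_le _ _).trans ?_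
          gcongr
          refine (norm_add_le _ _).trans ?_
          gcongr
          refine (norm_add_le _ _).trans ?_
          gcongr
          exact norm_add_le _ _
      _ ≤ 54*d*e + 81*d^2 + 12*a^4*b + 16*b^3 + 60*a^2*b^2 + 7*a^6 + 72*(2*b+a^2)*f := by
          rw [t1, t2, t3, t4, t5, t6]; linarith [t7]
  have final : 54*d*e + 81*d^2 + 12*a^4*b + 16*b^3 + 60*a^2*b^2 + 7*a^6 + 72*(2*b+a^2)*f ≤ 207 := by
    nlinarith [mul_nonneg ha0 hb0, sq_nonneg (1-a^2-2*b), mul_nonneg (mul_nonneg ha0 ha0) hb0,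
      mul_nonneg hb0 hb0, sq_nonneg a, sq_nonneg b, mul_nonneg hd0 he0,
      mul_nonneg (mul_nonneg hb0 hb0) hb0, sq_nonneg (a*b), sq_nonneg (a^2-1),
      mul_nonneg (sub_nonneg.2 h3) (sub_nonneg.2 h5),
      mul_nonneg (add_nonneg (add_nonneg hb0 hb0) (sq_nonneg a)) (sub_nonneg.2 h4),
      mul_nonneg (mul_nonneg ha0 ha0) (sub_nonneg.2 h2),
      mul_nonneg (sub_nonneg.2 h2) (sub_nonneg.2 h2),
      mul_nonneg (mul_nonneg hb0 (sub_nonneg.2 h2)) (sub_nonneg.2 h2),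
      mul_nonneg (mul_nonneg (mul_nonneg ha0 ha0) hb0) (sub_nonneg.2 h2)]
  linarith [key, final]
end
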